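/- arXiv:2503.23192 — 6 statements merged into one kernel-verified Lean document; each statement's English description precedes it below -/
import Mathlib

section
/- Let G be a finite abelian group and let φ: G₂ → G₁ be a surjective homomorphism of finite abelian groups whose kernel is a p-group (p an odd prime). Then the induced ring homomorphism ℤ_p[G₂] → ℤ_p[G₁] restricts to a surjective group homomorphism on unit groups ℤ_p[G₂]ˣ → ℤ_p[G₁]ˣ. -/
open MonoidAlgebra

section Aux

variable (p : ℕ) [Fact p.Prime] {G₂ : Type*} [CommGroup G₂] [Finite G₂]

/-- `p` lies in every maximal ideal of `ℤ_p[G]`. -/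
lemma p_mem_maximal (m : Ideal (MonoidAlgebra ℤ_[p] G₂)) [m.IsMaximal] :
    (p : MonoidAlgebra ℤ_[p] G₂) ∈ m := by
  have hfin : Module.Finite ℤ_[p] (MonoidAlgebra ℤ_[p] G₂) :=
    Module.Finite.equiv (MonoidAlgebra.coeffLinearEquiv ℤ_[p]).symm
  have hint : Algebra.IsIntegral ℤ_[p] (MonoidAlgebra ℤ_[p] G₂) :=
    Algebra.IsIntegral.of_finite _ _
  have hmax : (m.comap (algebraMap ℤ_[p] (MonoidAlgebra ℤ_[p] G₂))).IsMaximal :=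
    Ideal.isMaximal_comap_of_isIntegral_of_isMaximal m
  have heq : m.comap (algebraMap ℤ_[p] (MonoidAlgebra ℤ_[p] G₂)) =
      IsLocalRing.maximalIdeal ℤ_[p] := IsLocalRing.eq_maximalIdeal hmax
  have hp : (p : ℤ_[p]) ∈ m.comap (algebraMap ℤ_[p] (MonoidAlgebra ℤ_[p] G₂)) := by
    rw [heq, PadicInt.maximalIdeal_eq_span_p]
    exact Ideal.subset_span rfl
  simpa using hp

/-- Each generator `single k 1 - 1`, with `k` of `p`-power order, lies in every
maximal ideal of `ℤ_p[G]`. -/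
lemma gen_mem_maximal (m : Ideal (MonoidAlgebra ℤ_[p] G₂)) [m.IsMaximal]
    (k : G₂) (n : ℕ) (hk : k ^ p ^ n = 1) :
    (MonoidAlgebra.single k 1 - 1 : MonoidAlgebra ℤ_[p] G₂) ∈ m := by
  letI : Field (MonoidAlgebra ℤ_[p] G₂ ⧸ m) := Ideal.Quotient.field m
  have hpm : (p : MonoidAlgebra ℤ_[p] G₂) ∈ m := p_mem_maximal p m
  have hp0 : (p : MonoidAlgebra ℤ_[p] G₂ ⧸ m) = 0 := by
    have := (Ideal.Quotient.eq_zero_iff_mem (I := m)).2 hpm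
    simpa using this
  haveI : CharP (MonoidAlgebra ℤ_[p] G₂ ⧸ m) p :=
    ringChar.of_eq (CharP.ringChar_of_prime_eq_zero (Fact.out : p.Prime) hp0)
  set π := Ideal.Quotient.mk m
  rw [← Ideal.Quotient.eq_zero_iff_mem]
  have hx : (π (MonoidAlgebra.single k 1) - 1) ^ p ^ n = 0 := by
    rw [sub_pow_char_pow, one_pow, ← map_pow, MonoidAlgebra.single_pow, hk, one_pow,
      ← MonoidAlgebra.one_def, map_one, sub_self]
  have hpn : p ^ n ≠ 0 := pow_ne_zero _ (Fact.out : p.Prime).ne_zero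
  have hxx := (pow_eq_zero_iff hpn).mp hx
  rw [sub_eq_zero] at hxx
  rw [map_sub, map_one, hxx, sub_self]

end Aux

/-- If `φ : G₂ → G₁` is a surjective homomorphism of finite abelian
groups whose kernel is a `p`-group (`p` an odd prime), then the induced ring homomorphism
`ℤ_p[G₂] → ℤ_p[G₁]` is surjective on unit groups. -/
theorem induced_unit_map_surjective
    (p : ℕ) [Fact p.Prime] (hp : Odd p)
    (G₁ G₂ : Type*) [CommGroup G₁] [CommGroup G₂] [Finite G₁] [Finite G₂]
    (φ : G₂ →* G₁) (hφ : Function.Surjective φ)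
    (hker : IsPGroup p φ.ker) :
    Function.Surjective
      (Units.map ((MonoidAlgebra.mapDomainRingHom ℤ_[p] φ : MonoidAlgebra ℤ_[p] G₂ →+* MonoidAlgebra ℤ_[p] G₁) : MonoidAlgebra ℤ_[p] G₂ →* MonoidAlgebra ℤ_[p] G₁)) := by
  classical
  set f : MonoidAlgebra ℤ_[p] G₂ →+* MonoidAlgebra ℤ_[p] G₁ :=
    MonoidAlgebra.mapDomainRingHom ℤ_[p] φ with hf
  -- f is surjective
  have hfsurj : Function.Surjective f := by
    intro b
    refine ⟨MonoidAlgebra.mapDomain (Function.surjInv hφ) b, ?_⟩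
    apply MonoidAlgebra.coeff_injective
    show Finsupp.mapDomain φ (Finsupp.mapDomain (Function.surjInv hφ) b.coeff) = b.coeff
    rw [← Finsupp.mapDomain_comp]
    have : (φ : G₂ → G₁) ∘ Function.surjInv hφ = id := by
      funext x; exact Function.surjInv_eq hφ x
    rw [this, Finsupp.mapDomain_id]
  -- the generating set of the kernel ideal
  set S : Set (MonoidAlgebra ℤ_[p] G₂) :=
    {x | ∃ k ∈ φ.ker, x = MonoidAlgebra.single k 1 - 1} with hS
  set I : Ideal (MonoidAlgebra ℤ_[p] G₂) := Ideal.span S with hI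
  -- congruence modulo I
  have L : ∀ x y : G₂, φ x = φ y →
      Ideal.Quotient.mk I (MonoidAlgebra.single x 1) =
        Ideal.Quotient.mk I (MonoidAlgebra.single y 1) := by
    intro x y hxy
    rw [Ideal.Quotient.eq]
    have hk : y⁻¹ * x ∈ φ.ker := by
      simp [MonoidHom.mem_ker, hxy]
    have hrw : (MonoidAlgebra.single x 1 - MonoidAlgebra.single y 1 :
        MonoidAlgebra ℤ_[p] G₂) =
        MonoidAlgebra.single y 1 * (MonoidAlgebra.single (y⁻¹ * x) 1 - 1) := by
      rw [mul_sub, mul_one, MonoidAlgebra.single_mul_single, one_mul,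
        mul_inv_cancel_left]
    rw [hrw]
    exact Ideal.mul_mem_left _ _ (Ideal.subset_span ⟨_, hk, rfl⟩)
  -- a section of φ
  set s : G₁ → G₂ := Function.surjInv hφ with hs
  have hφs : ∀ g₁, φ (s g₁) = g₁ := fun g₁ => Function.surjInv_eq hφ g₁
  -- the retraction ψ : G₁ →* quotient
  set ψ : G₁ →* MonoidAlgebra ℤ_[p] G₂ ⧸ I :=
    { toFun := fun g₁ => Ideal.Quotient.mk I (MonoidAlgebra.single (s g₁) 1),
      map_one' := by
        show Ideal.Quotient.mk I (MonoidAlgebra.single (s 1) 1) = 1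
        have h1 : Ideal.Quotient.mk I (MonoidAlgebra.single (s 1) 1) =
            Ideal.Quotient.mk I (MonoidAlgebra.single (1 : G₂) 1) :=
          L _ _ (by rw [hφs, map_one])
        rw [h1, ← MonoidAlgebra.one_def, map_one]
      map_mul' := fun x y => by
        show Ideal.Quotient.mk I (MonoidAlgebra.single (s (x * y)) 1) =
          Ideal.Quotient.mk I (MonoidAlgebra.single (s x) 1) *
            Ideal.Quotient.mk I (MonoidAlgebra.single (s y) 1)
        have h1 : Ideal.Quotient.mk I (MonoidAlgebra.single (s (x * y)) 1) =
            Ideal.Quotient.mk I (MonoidAlgebra.single (s x * s y) 1) :=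
          L _ _ (by rw [hφs, map_mul, hφs, hφs])
        rw [h1, ← map_mul, MonoidAlgebra.single_mul_single, mul_one] } with hψ
  set g : MonoidAlgebra ℤ_[p] G₁ →ₐ[ℤ_[p]] MonoidAlgebra ℤ_[p] G₂ ⧸ I :=
    MonoidAlgebra.lift ℤ_[p] _ G₁ ψ with hg
  have hcompAlg : g.comp (MonoidAlgebra.mapDomainAlgHom ℤ_[p] ℤ_[p] φ) =
      Ideal.Quotient.mkₐ ℤ_[p] I := by
    apply MonoidAlgebra.algHom_ext ?_ (Subsingleton.elim _ _)
    intro x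
    rw [AlgHom.comp_apply, MonoidAlgebra.mapDomainAlgHom_apply,
      MonoidAlgebra.mapDomain_single, MonoidAlgebra.lift_single, one_smul]
    show Ideal.Quotient.mk I (MonoidAlgebra.single (s (φ x)) 1) =
      Ideal.Quotient.mk I (MonoidAlgebra.single x 1)
    exact L _ _ (by rw [hφs])
  have hcomp : ∀ a, g (f a) = Ideal.Quotient.mk I a := by
    intro a
    have h2 := DFunLike.congr_fun hcompAlg a
    exact h2
  -- kernel elements lie in I
  have hker_span : ∀ a, f a = 0 → a ∈ I := by
    intro a ha
    have : Ideal.Quotient.mk I a = 0 := by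
      rw [← hcomp, ha, map_zero]
    exact (Ideal.Quotient.eq_zero_iff_mem).1 this
  -- I is contained in the Jacobson radical
  have hspan_jac : I ≤ Ideal.jacobson ⊥ := by
    rw [hI, Ideal.jacobson, le_sInf_iff]
    rintro m ⟨-, hm⟩
    rw [Ideal.span_le]
    rintro x ⟨k, hk, rfl⟩
    obtain ⟨n, hn⟩ := hker ⟨k, hk⟩
    have hkn : k ^ p ^ n = 1 := by
      have := congrArg (Subgroup.subtype _) hn
      simpa using this
    exact gen_mem_maximal p m k n hkn
  -- units lift along f
  have hlift : ∀ a, IsUnit (f a) → IsUnit a := by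
    intro a ha
    obtain ⟨u, hu⟩ := ha
    obtain ⟨b, hb⟩ := hfsurj ((u⁻¹ : (MonoidAlgebra ℤ_[p] G₁)ˣ) : MonoidAlgebra ℤ_[p] G₁)
    have h0 : f (a * b - 1) = 0 := by
      rw [map_sub, map_mul, map_one, ← hu, hb]
      simp
    have hj : a * b - 1 ∈ Ideal.jacobson ⊥ := hspan_jac (hker_span _ h0)
    have : IsUnit (a * b) := Ideal.isUnit_of_sub_one_mem_jacobson_bot _ hj
    exact isUnit_of_mul_isUnit_left this
  intro u
  obtain ⟨a, ha⟩ := hfsurj (u : MonoidAlgebra ℤ_[p] G₁)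
  obtain ⟨v, hv⟩ := hlift a (by rw [ha]; exact u.isUnit)
  refine ⟨v, ?_⟩
  ext
  simp only [Units.coe_map, MonoidHom.coe_coe]
  rw [hv, ha]
end

section
/- Let R be a commutative ring and M an R-module with a presentation P₁ → P₀ → M → 0 where P₀ and P₁ are finitely generated projective R-modules having equal rank after localization at every maximal ideal. Then the 0-th Fitting ideal of M is locally principal: for every prime ideal 𝔪 of R, Fitt_R(M)_𝔪 = det(ρ_𝔪)·R_𝔪, where ρ_𝔪 is the localization of the presenting map. -/
/-- The 0-th Fitting ideal of a module `M` over a commutative ring `R`. -/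
def fittingIdeal0 (R : Type*) [CommRing R] (M : Type*) [AddCommGroup M] [Module R M] :
    Ideal R :=
  Ideal.span { r : R | ∃ (n : ℕ) (π : (Fin n → R) →ₗ[R] M) (A : Matrix (Fin n) (Fin n) R),
    Function.Surjective π ∧ (∀ j, π (fun i => A i j) = 0) ∧ r = A.det }

open Matrix

section RelIdeal
variable (A : Type*) [CommRing A] {N : Type*} [AddCommGroup N] [Module A N]

/-- The set of determinants of relation matrices for the family `v`. -/
def relDetSet {ι : Type*} [Fintype ι] [DecidableEq ι] (v : ι → N) : Set A :=
  {r | ∃ B : Matrix ι ι A, (∀ j, ∑ i, B i j • v i = 0) ∧ r = B.det}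

/-- The ideal generated by determinants of relation matrices for the family `v`. -/
def relDetIdeal {ι : Type*} [Fintype ι] [DecidableEq ι] (v : ι → N) : Ideal A :=
  Ideal.span (relDetSet A v)

variable {A}

lemma det_mem_relDetIdeal {ι : Type*} [Fintype ι] [DecidableEq ι] {v : ι → N}
    (B : Matrix ι ι A) (hB : ∀ j, ∑ i, B i j • v i = 0) : B.det ∈ relDetIdeal A v :=
  Ideal.subset_span ⟨B, hB, rfl⟩

lemma relDetIdeal_comp_equiv_le {ι ι' : Type*} [Fintype ι] [DecidableEq ι]
    [Fintype ι'] [DecidableEq ι'] (v : ι → N) (e : ι' ≃ ι) :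
    relDetIdeal A (v ∘ e) ≤ relDetIdeal A v := by
  refine Ideal.span_le.mpr ?_
  rintro r ⟨B, hB, rfl⟩
  have : B.det = (B.submatrix e.symm e.symm).det := (Matrix.det_submatrix_equiv_self e.symm B).symm
  rw [this]
  refine det_mem_relDetIdeal _ fun j => ?_
  rw [← Equiv.sum_comp e (fun i => B.submatrix e.symm e.symm i j • v i)]
  simpa [Matrix.submatrix] using hB (e.symm j)

lemma relDetIdeal_comp_equiv {ι ι' : Type*} [Fintype ι] [DecidableEq ι]
    [Fintype ι'] [DecidableEq ι'] (v : ι → N) (e : ι' ≃ ι) :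
    relDetIdeal A (v ∘ e) = relDetIdeal A v := by
  refine le_antisymm (relDetIdeal_comp_equiv_le v e) ?_
  have := relDetIdeal_comp_equiv_le (A := A) (v ∘ e) e.symm
  have h : (v ∘ e) ∘ e.symm = v := by funext i; simp
  rwa [h] at this


lemma relDetIdeal_cons (v : Fin k → N) (y : N) (hy : y ∈ Submodule.span A (Set.range v)) :
    relDetIdeal A (Fin.cons y v : Fin (k+1) → N) = relDetIdeal A v := by
  obtain ⟨a, ha⟩ := (Submodule.mem_span_range_iff_exists_fun A).mp hy
  set w : Fin (k+1) → N := Fin.cons y v with hw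
  set u : Fin (k+1) → A := Fin.cons (-1) a with hudef
  have hu : ∑ i, u i • w i = 0 := by
    rw [Fin.sum_univ_succ]
    simp only [hudef, hw, Fin.cons_zero, Fin.cons_succ, neg_smul, one_smul]
    rw [ha]; exact neg_add_cancel y
  have hu0 : u 0 = -1 := rfl
  -- expansion step: single possibly-nonzero entry in row 0
  have expand : ∀ (l : Fin (k+1)) (B : Matrix (Fin (k+1)) (Fin (k+1)) A),
      (∀ j, ∑ i, B i j • w i = 0) → (∀ j, j ≠ l → B 0 j = 0) →
      B.det ∈ relDetIdeal A v := by
    intro l B hrel hzero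
    rw [Matrix.det_succ_row_zero]
    rw [Finset.sum_eq_single_of_mem l (Finset.mem_univ l)
      (fun j _ hj => by rw [hzero j hj]; ring)]
    have hmem : (B.submatrix Fin.succ l.succAbove).det ∈ relDetIdeal A v := by
      refine det_mem_relDetIdeal _ fun j => ?_
      have h0 : B 0 (l.succAbove j) = 0 := hzero _ (Fin.succAbove_ne l j)
      have hr := hrel (l.succAbove j)
      rw [Fin.sum_univ_succ] at hr
      simp only [hw, Fin.cons_zero, Fin.cons_succ] at hr
      rw [h0, zero_smul, zero_add] at hr
      simpa [Matrix.submatrix] using hr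
    exact Ideal.mul_mem_left _ _ hmem
  -- clearing step with pivot column l equal to u
  have clearQ : ∀ (s : ℕ) (l : Fin (k+1)) (B : Matrix (Fin (k+1)) (Fin (k+1)) A),
      (∀ j, ∑ i, B i j • w i = 0) → (∀ i, B i l = u i) →
      (∀ j, j ≠ l → s ≤ (j:ℕ) → B 0 j = 0) → B.det ∈ relDetIdeal A v := by
    intro s
    induction s with
    | zero =>
      intro l B hrel hcol hz
      exact expand l B hrel (fun j hj => hz j hj (Nat.zero_le _))
    | succ s ih =>
      intro l B hrel hcol hz
      by_cases hs : s < k + 1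
      · set j₀ : Fin (k+1) := ⟨s, hs⟩ with hj₀
        by_cases hjl : j₀ = l
        · refine ih l B hrel hcol fun j hj hsj => ?_
          refine hz j hj (Nat.lt_of_le_of_ne hsj fun hc => hj ?_)
          rw [← hjl]; exact Fin.ext hc.symm
        · have hdet0 : (B.updateCol j₀ u).det = 0 := by
            refine Matrix.det_zero_of_column_eq hjl fun i => ?_
            rw [Matrix.updateCol_self, Matrix.updateCol_ne (Ne.symm hjl), hcol i]
          have hfun : (fun i => B i j₀) = (fun i => B i j₀ + B 0 j₀ * u i) + (-(B 0 j₀)) • u := by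
            funext i; simp only [Pi.add_apply, Pi.smul_apply, smul_eq_mul]; ring
          have key : B.det = (B.updateCol j₀ (fun i => B i j₀ + B 0 j₀ * u i)).det := by
            conv_lhs => rw [← Matrix.updateCol_eq_self B j₀]
            rw [hfun, Matrix.det_updateCol_add, Matrix.det_updateCol_smul, hdet0,
              mul_zero, add_zero]
          rw [key]
          refine ih l _ (fun j => ?_) (fun i => ?_) (fun j hj hsj => ?_)
          · by_cases h : j = j₀
            · subst h
              simp only [Matrix.updateCol_self]
              rw [show (fun i => (B i j₀ + B 0 j₀ * u i) • w i)
                    = fun i => (B i j₀ • w i + B 0 j₀ • (u i • w i)) by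
                  funext i; rw [add_smul, mul_smul]]
              rw [Finset.sum_add_distrib, hrel j₀, ← Finset.smul_sum, hu, smul_zero, add_zero]
            · have : ∀ i, (B.updateCol j₀ (fun i => B i j₀ + B 0 j₀ * u i)) i j = B i j :=
                fun i => Matrix.updateCol_ne h
              simp only [this]; exact hrel j
          · rw [Matrix.updateCol_ne (fun hc => hjl hc.symm)]; exact hcol i
          · by_cases h : j = j₀
            · subst h
              rw [Matrix.updateCol_self, hu0]
              ring
            · rw [Matrix.updateCol_ne h]
              refine hz j hj (Nat.lt_of_le_of_ne hsj fun hc => h (Fin.ext hc.symm))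
      · refine ih l B hrel hcol fun j hj hsj =>
          absurd hsj (not_le.mpr (lt_of_lt_of_le j.isLt (not_lt.mp hs)))
  -- master clearing
  have master : ∀ (s : ℕ) (B : Matrix (Fin (k+1)) (Fin (k+1)) A),
      (∀ j, ∑ i, B i j • w i = 0) → (∀ j : Fin (k+1), s ≤ (j:ℕ) → B 0 j = 0) →
      B.det ∈ relDetIdeal A v := by
    intro s
    induction s with
    | zero =>
      intro B _ hz
      have : B.det = 0 := Matrix.det_eq_zero_of_row_eq_zero 0 (fun j => hz j (Nat.zero_le _))
      rw [this]
      exact Ideal.zero_mem _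
    | succ s ih =>
      intro B hrel hz
      by_cases hs : s < k + 1
      · set l : Fin (k+1) := ⟨s, hs⟩ with hl
        have hBu : (B.updateCol l u).det ∈ relDetIdeal A v := by
          refine clearQ (s+1) l _ (fun j => ?_) (fun i => Matrix.updateCol_self)
            (fun j hj hsj => ?_)
          · by_cases h : j = l
            · subst h
              simp only [Matrix.updateCol_self]
              exact hu
            · have : ∀ i, (B.updateCol l u) i j = B i j := fun i => Matrix.updateCol_ne h
              simp only [this]; exact hrel j
          · rw [Matrix.updateCol_ne hj]; exact hz j hsj
        have hBc : (B.updateCol l (fun i => B i l + B 0 l * u i)).det ∈ relDetIdeal A v := by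
          refine ih _ (fun j => ?_) (fun j hsj => ?_)
          · by_cases h : j = l
            · subst h
              simp only [Matrix.updateCol_self]
              rw [show (fun i => (B i l + B 0 l * u i) • w i)
                    = fun i => (B i l • w i + B 0 l • (u i • w i)) by
                  funext i; rw [add_smul, mul_smul]]
              rw [Finset.sum_add_distrib, hrel l, ← Finset.smul_sum, hu, smul_zero, add_zero]
            · have : ∀ i, (B.updateCol l (fun i => B i l + B 0 l * u i)) i j = B i j :=
                fun i => Matrix.updateCol_ne h
              simp only [this]; exact hrel j
          · by_cases h : j = l
            · subst h; rw [Matrix.updateCol_self, hu0]; ring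
            · rw [Matrix.updateCol_ne h]
              exact hz j (Nat.lt_of_le_of_ne hsj fun hc => h (Fin.ext hc.symm))
        have hfun : (fun i => B i l) = (fun i => B i l + B 0 l * u i) + (-(B 0 l)) • u := by
          funext i; simp only [Pi.add_apply, Pi.smul_apply, smul_eq_mul]; ring
        have key : B.det = (B.updateCol l (fun i => B i l + B 0 l * u i)).det
            + (-(B 0 l)) * (B.updateCol l u).det := by
          conv_lhs => rw [← Matrix.updateCol_eq_self B l]
          rw [hfun, Matrix.det_updateCol_add, Matrix.det_updateCol_smul]
        rw [key]
        exact Ideal.add_mem _ hBc (Ideal.mul_mem_left _ _ hBu)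
      · refine ih B hrel fun j hsj =>
          absurd hsj (not_le.mpr (lt_of_lt_of_le j.isLt (not_lt.mp hs)))
  refine le_antisymm (Ideal.span_le.mpr ?_) (Ideal.span_le.mpr ?_)
  · rintro r ⟨B, hB, rfl⟩
    exact master (k+1) B hB (fun j hsj => absurd hsj (not_le.mpr j.isLt))
  · -- embed k×k relation matrices
    rintro r ⟨B, hB, rfl⟩
    set B' : Matrix (Fin (k+1)) (Fin (k+1)) A :=
      Matrix.of fun i j => Fin.cases (u i) (fun j' => Fin.cases 0 (fun i' => B i' j') i) j
      with hB'
    have hB'rel : ∀ j, ∑ i, B' i j • w i = 0 := by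
      refine Fin.cases ?_ (fun j' => ?_)
      · simpa [hB'] using hu
      · rw [Fin.sum_univ_succ]
        simp only [hB', hw, Matrix.of_apply, Fin.cases_succ, Fin.cases_zero, Fin.cons_zero,
          Fin.cons_succ, zero_smul, zero_add]
        exact hB j'
    have hdet : B'.det = -B.det := by
      rw [Matrix.det_succ_row_zero]
      rw [Finset.sum_eq_single_of_mem 0 (Finset.mem_univ 0) (fun j _ hj => ?_)]
      · have h00 : B' 0 0 = -1 := rfl
        have : (B'.submatrix Fin.succ (Fin.succAbove 0)) = B := by
          ext i j
          simp [hB', Fin.succAbove]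
        rw [this, h00]
        simp
      · obtain ⟨j', rfl⟩ := Fin.exists_succ_eq.mpr hj
        have : B' 0 j'.succ = 0 := rfl
        rw [this]; ring
    have : B.det = -B'.det := by rw [hdet, neg_neg]
    rw [this]
    exact Submodule.neg_mem _ (det_mem_relDetIdeal B' hB'rel)

lemma span_range_append_eq_top {n m : ℕ} (v : Fin n → N) (u : Fin m → N)
    (hv : Submodule.span A (Set.range v) = ⊤) :
    Submodule.span A (Set.range (Fin.append u v)) = ⊤ := by
  rw [eq_top_iff, ← hv]
  refine Submodule.span_mono fun x hx => ?_
  obtain ⟨i, rfl⟩ := hx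
  exact ⟨Fin.natAdd m i, Fin.append_right u v i⟩

lemma relDetIdeal_append_le {n : ℕ} (v : Fin n → N)
    (hv : Submodule.span A (Set.range v) = ⊤) :
    ∀ (m : ℕ) (u : Fin m → N), relDetIdeal A (Fin.append u v) ≤ relDetIdeal A v := by
  intro m
  induction m with
  | zero =>
    intro u
    rw [Fin.append_left_nil u v rfl]
    exact le_of_eq (relDetIdeal_comp_equiv v (finCongr (Nat.zero_add n)))
  | succ m ih =>
    intro u
    conv_lhs => rw [← Fin.cons_self_tail u, Fin.append_cons]
    have hcast : (Fin.cons (u 0) (Fin.append (Fin.tail u) v)) ∘ Fin.cast (Nat.add_right_comm m 1 n)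
        = (Fin.cons (u 0) (Fin.append (Fin.tail u) v)) ∘ (finCongr (Nat.add_right_comm m 1 n)) :=
      rfl
    rw [hcast, relDetIdeal_comp_equiv (Fin.cons (u 0) (Fin.append (Fin.tail u) v))
      (finCongr (Nat.add_right_comm m 1 n))]
    rw [relDetIdeal_cons _ _ (by rw [span_range_append_eq_top v (Fin.tail u) hv]; trivial)]
    exact ih (Fin.tail u)

lemma relDetSet_subset_relDetIdeal_append {n m : ℕ} (w : Fin m → N) (v : Fin n → N)
    (hw : Submodule.span A (Set.range w) = ⊤) :
    relDetSet A w ⊆ (relDetIdeal A (Fin.append w v) : Set A) := by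
  rintro r ⟨B, hB, rfl⟩
  have hsum : Fin.append w v ∘ finSumFinEquiv = Sum.elim w v := by
    funext i
    cases i with
    | inl i => simp [Fin.append_left]
    | inr i => simp [Fin.append_right]
  rw [← relDetIdeal_comp_equiv (Fin.append w v) finSumFinEquiv, hsum]
  choose c hc using fun j : Fin n =>
    (Submodule.mem_span_range_iff_exists_fun A).mp (hw ▸ Submodule.mem_top : v j ∈ Submodule.span A (Set.range w))
  set G : Matrix (Fin m ⊕ Fin n) (Fin m ⊕ Fin n) A :=
    Matrix.fromBlocks B (Matrix.of fun i j => c j i) 0 (-1) with hG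
  have hGrel : ∀ j, ∑ i, G i j • Sum.elim w v i = 0 := by
    intro j
    rw [Fintype.sum_sum_type]
    cases j with
    | inl j =>
      simp only [hG, Matrix.fromBlocks_apply₁₁, Matrix.fromBlocks_apply₂₁, Sum.elim_inl,
        Sum.elim_inr, Matrix.zero_apply, zero_smul, Finset.sum_const_zero, add_zero]
      exact hB j
    | inr j =>
      simp only [hG, Matrix.fromBlocks_apply₁₂, Matrix.fromBlocks_apply₂₂, Sum.elim_inl,
        Sum.elim_inr, Matrix.neg_apply, Matrix.one_apply, Matrix.of_apply]
      rw [hc j]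
      have hterm : ∀ x : Fin n, (-if x = j then (1:A) else 0) • v x
          = -(if x = j then v x else 0) := by
        intro x; split <;> simp
      simp only [hterm]
      simp
  have hdet : G.det = B.det * (-1:A)^n := by
    rw [hG, Matrix.det_fromBlocks_zero₂₁]
    congr 1
    rw [show (-1 : Matrix (Fin n) (Fin n) A) = -(1 : Matrix (Fin n) (Fin n) A) from rfl,
      Matrix.det_neg, Matrix.det_one, mul_one, Fintype.card_fin]
  have h2 : ((-1:A)^n) * ((-1)^n) = 1 := by
    rw [← pow_add]; exact Even.neg_one_pow ⟨n, rfl⟩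
  have hfin : B.det = (-1:A)^n * G.det := by
    rw [hdet, mul_comm B.det, ← mul_assoc, h2, one_mul]
  rw [hfin]
  exact Ideal.mul_mem_left _ _ (det_mem_relDetIdeal G hGrel)

lemma relDetSet_subset_relDetIdeal {n m : ℕ} {v : Fin n → N} {w : Fin m → N}
    (hv : Submodule.span A (Set.range v) = ⊤) (hw : Submodule.span A (Set.range w) = ⊤) :
    relDetSet A w ⊆ (relDetIdeal A v : Set A) :=
  fun r hr => relDetIdeal_append_le v hv m w (relDetSet_subset_relDetIdeal_append w v hw hr)

lemma relDetIdeal_eq_relDetIdeal {n m : ℕ} {v : Fin n → N} {w : Fin m → N}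
    (hv : Submodule.span A (Set.range v) = ⊤) (hw : Submodule.span A (Set.range w) = ⊤) :
    relDetIdeal A w = relDetIdeal A v :=
  le_antisymm (Ideal.span_le.mpr (relDetSet_subset_relDetIdeal hv hw))
    (Ideal.span_le.mpr (relDetSet_subset_relDetIdeal hw hv))

/-- Family attached to a surjection `π : Aⁿ → N`. -/
lemma surjective_family {n : ℕ} (π : (Fin n → A) →ₗ[A] N) (hπ : Function.Surjective π) :
    Submodule.span A (Set.range fun i => π (fun j => if i = j then 1 else 0)) = ⊤ := by
  rw [eq_top_iff]
  rintro y -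
  obtain ⟨x, rfl⟩ := hπ y
  rw [LinearMap.pi_apply_eq_sum_univ π x]
  exact (Submodule.mem_span_range_iff_exists_fun A).mpr ⟨x, rfl⟩

lemma fittingIdeal0_eq_relDetIdeal {n : ℕ} (v : Fin n → N)
    (hv : Submodule.span A (Set.range v) = ⊤) :
    fittingIdeal0 A N = relDetIdeal A v := by
  refine le_antisymm (Ideal.span_le.mpr ?_) (Ideal.span_le.mpr ?_)
  · rintro r ⟨k, π, B, hπ, hrel, rfl⟩
    refine relDetSet_subset_relDetIdeal hv (surjective_family π hπ) ⟨B, fun j => ?_, rfl⟩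
    rw [← LinearMap.pi_apply_eq_sum_univ π (fun i => B i j)]
    exact hrel j
  · rintro r ⟨B, hB, rfl⟩
    refine Ideal.subset_span ⟨n, Fintype.linearCombination A v, B, ?_, fun j => ?_, rfl⟩
    · rw [← LinearMap.range_eq_top, Fintype.range_linearCombination, hv]
    · rw [Fintype.linearCombination_apply]
      exact hB j

end RelIdeal

section Loc
variable {R : Type*} [CommRing R] (S : Submonoid R) {M : Type*} [AddCommGroup M] [Module R M]

lemma span_range_mkLinearMap_comp {k : ℕ} (v : Fin k → M)
    (hv : Submodule.span R (Set.range v) = ⊤) :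
    Submodule.span (Localization S)
      (Set.range (⇑(LocalizedModule.mkLinearMap S M) ∘ v)) = ⊤ := by
  rw [eq_top_iff]
  rintro z -
  refine LocalizedModule.induction_on (fun m s => ?_) z
  have hm : (LocalizedModule.mkLinearMap S M) m ∈ Submodule.span (Localization S)
      (Set.range (⇑(LocalizedModule.mkLinearMap S M) ∘ v)) := by
    obtain ⟨c, hc⟩ := (Submodule.mem_span_range_iff_exists_fun R).mp
      (hv ▸ Submodule.mem_top : m ∈ Submodule.span R (Set.range v))
    rw [← hc, map_sum]
    refine Submodule.sum_mem _ fun i _ => ?_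
    rw [_root_.map_smul]
    exact Submodule.smul_of_tower_mem _ _ (Submodule.subset_span ⟨i, rfl⟩)
  have hmk : LocalizedModule.mk m s
      = Localization.mk 1 s • (LocalizedModule.mkLinearMap S M) m := by
    rw [show (LocalizedModule.mkLinearMap S M) m = LocalizedModule.mk m 1 from rfl,
      LocalizedModule.mk_smul_mk, one_smul, mul_one]
  rw [hmk]
  exact Submodule.smul_mem _ _ hm

lemma relDetSet_mk_subset_map {k : ℕ} (w : Fin k → M)
    (hw : Submodule.span R (Set.range w) = ⊤) :
    relDetSet (Localization S) (⇑(LocalizedModule.mkLinearMap S M) ∘ w)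
      ⊆ (Ideal.map (algebraMap R (Localization S)) (fittingIdeal0 R M) : Set (Localization S)) := by
  rintro r ⟨B, hB, rfl⟩
  obtain ⟨t, ht⟩ := IsLocalization.exist_integer_multiples_of_finite S
    (fun p : Fin k × Fin k => B p.1 p.2)
  choose a ha using ht
  -- ha : ∀ p, φ (a p) = t • B p.1 p.2
  have hcol : ∀ j, ∃ s : S, (s : R) • (∑ i, a (i, j) • w i) = 0 := by
    intro j
    have h1 : (LocalizedModule.mkLinearMap S M) (∑ i, a (i, j) • w i) = 0 := by
      rw [map_sum]
      have hterm : ∀ i, (LocalizedModule.mkLinearMap S M) (a (i, j) • w i)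
          = ((t : R) • B i j) • (⇑(LocalizedModule.mkLinearMap S M) ∘ w) i := by
        intro i
        rw [_root_.map_smul, ← ha (i, j), algebraMap_smul]
        rfl
      simp only [hterm]
      rw [show (fun i => ((t:R) • B i j) • (⇑(LocalizedModule.mkLinearMap S M) ∘ w) i)
            = fun i => (t:R) • (B i j • (⇑(LocalizedModule.mkLinearMap S M) ∘ w) i) by
        funext i; rw [smul_assoc]]
      rw [← Finset.smul_sum, hB j, smul_zero]
    obtain ⟨s, hs⟩ := (IsLocalizedModule.eq_zero_iff S (LocalizedModule.mkLinearMap S M)).mp h1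
    exact ⟨s, hs⟩
  choose s hs using hcol
  set matA : Matrix (Fin k) (Fin k) R := fun i j => a (i, j) with hmatA
  set A' : Matrix (Fin k) (Fin k) R := matA * Matrix.diagonal (fun j => (s j : R)) with hA'
  have hA'rel : ∀ j, ∑ i, A' i j • w i = 0 := by
    intro j
    have : ∀ i, A' i j = a (i, j) * (s j : R) := fun i => Matrix.mul_diagonal ..
    simp only [this]
    rw [show (fun i => (a (i,j) * (s j : R)) • w i) = fun i => (s j : R) • (a (i,j) • w i) by
      funext i; rw [mul_comm, mul_smul]]
    rw [← Finset.smul_sum]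
    exact hs j
  have hdetA' : A'.det ∈ fittingIdeal0 R M := by
    rw [fittingIdeal0_eq_relDetIdeal w hw]
    exact det_mem_relDetIdeal A' hA'rel
  have hmapdet : algebraMap R (Localization S) matA.det
      = (algebraMap R (Localization S) (t:R))^k * B.det := by
    rw [RingHom.map_det]
    have hmm : (algebraMap R (Localization S)).mapMatrix matA
        = (algebraMap R (Localization S) (t:R)) • B := by
      ext i j
      rw [RingHom.mapMatrix_apply, Matrix.map_apply, hmatA, Matrix.smul_apply, smul_eq_mul,
        ← Algebra.smul_def]
      exact ha (i, j)
    rw [hmm, Matrix.det_smul, Fintype.card_fin]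
  have hkey : ((algebraMap R (Localization S) (t:R))^k
      * algebraMap R (Localization S) (∏ j, (s j : R))) * B.det
      = algebraMap R (Localization S) A'.det := by
    rw [hA', Matrix.det_mul, Matrix.det_diagonal, _root_.map_mul, hmapdet, map_prod]
    ring
  have hunit : IsUnit ((algebraMap R (Localization S) (t:R))^k
      * algebraMap R (Localization S) (∏ j, (s j : R))) := by
    refine IsUnit.mul (IsUnit.pow _ (IsLocalization.map_units (Localization S) t)) ?_
    have hcoe : (∏ j, (s j : R)) = (((∏ j, s j : S) : S) : R) := by
      rw [← Submonoid.coe_finset_prod]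
    rw [hcoe]
    exact IsLocalization.map_units (Localization S) (∏ j, s j)
  obtain ⟨U, hU⟩ := hunit
  have hfin : B.det = (U⁻¹ : (Localization S)ˣ) * algebraMap R (Localization S) A'.det := by
    rw [← hkey, ← hU, ← mul_assoc, Units.inv_mul, one_mul]
  rw [hfin]
  exact Ideal.mul_mem_left _ _ (Ideal.mem_map_of_mem _ hdetA')

lemma map_fittingIdeal_le {n : ℕ} (u : Fin n → LocalizedModule S M)
    (hu : Submodule.span (Localization S) (Set.range u) = ⊤) :
    Ideal.map (algebraMap R (Localization S)) (fittingIdeal0 R M) ≤ relDetIdeal (Localization S) u := by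
  rw [fittingIdeal0, Ideal.map_span]
  refine Ideal.span_le.mpr ?_
  rintro r' ⟨r, ⟨k, π, B, hπ, hrel, rfl⟩, rfl⟩
  set w : Fin k → M := fun i => π (fun j => if i = j then 1 else 0) with hwdef
  have hw : Submodule.span R (Set.range w) = ⊤ := by
    rw [eq_top_iff]
    rintro y -
    obtain ⟨x, rfl⟩ := hπ y
    rw [LinearMap.pi_apply_eq_sum_univ π x]
    exact (Submodule.mem_span_range_iff_exists_fun R).mpr ⟨x, rfl⟩
  have hrelw : ∀ j, ∑ i, B i j • w i = 0 := by
    intro j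
    rw [← LinearMap.pi_apply_eq_sum_univ π (fun i => B i j)]
    exact hrel j
  have hrel' : ∀ j, ∑ i, (B.map (algebraMap R (Localization S))) i j
      • (⇑(LocalizedModule.mkLinearMap S M) ∘ w) i = 0 := by
    intro j
    have hterm : ∀ i, (B.map (algebraMap R (Localization S))) i j
        • (⇑(LocalizedModule.mkLinearMap S M) ∘ w) i
        = (LocalizedModule.mkLinearMap S M) (B i j • w i) := by
      intro i
      rw [Matrix.map_apply, Function.comp_apply, _root_.map_smul, algebraMap_smul]
    simp only [hterm]
    rw [← map_sum, hrelw j, map_zero]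
  have hdet : algebraMap R (Localization S) B.det
      = (B.map (algebraMap R (Localization S))).det := by
    rw [RingHom.map_det, RingHom.mapMatrix_apply]
  rw [hdet]
  have hw' : Submodule.span (Localization S)
      (Set.range (⇑(LocalizedModule.mkLinearMap S M) ∘ w)) = ⊤ :=
    span_range_mkLinearMap_comp S w hw
  have h1 : (B.map (algebraMap R (Localization S))).det
      ∈ relDetIdeal (Localization S) (⇑(LocalizedModule.mkLinearMap S M) ∘ w) :=
    det_mem_relDetIdeal _ hrel'
  rwa [← fittingIdeal0_eq_relDetIdeal _ hw', fittingIdeal0_eq_relDetIdeal _ hu] at h1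
end Loc

section SquarePres
variable {A : Type*} [CommRing A] {P₀ P₁ N : Type*}
  [AddCommGroup P₀] [Module A P₀] [AddCommGroup P₁] [Module A P₁]
  [AddCommGroup N] [Module A N]
  (ρ : P₁ →ₗ[A] P₀) (g : P₀ →ₗ[A] N)

lemma span_range_comp_basis {n : ℕ} (hg : Function.Surjective g) (b₀ : Module.Basis (Fin n) A P₀) :
    Submodule.span A (Set.range (⇑g ∘ b₀)) = ⊤ := by
  rw [Set.range_comp, Submodule.span_image, Module.Basis.span_eq, Submodule.map_top,
    LinearMap.range_eq_top.mpr hg]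

lemma relDetIdeal_square {n : ℕ} (hg : Function.Surjective g) (hex : Function.Exact ρ g)
    (b₀ : Module.Basis (Fin n) A P₀) (b₁ : Module.Basis (Fin n) A P₁) :
    relDetIdeal A (⇑g ∘ b₀) = Ideal.span {(LinearMap.toMatrix b₁ b₀ ρ).det} := by
  set T := LinearMap.toMatrix b₁ b₀ ρ with hT
  have key : ∀ x : Fin n → A, ∑ i, x i • (⇑g ∘ b₀) i = g (∑ i, x i • b₀ i) := by
    intro x
    rw [map_sum]
    simp [_root_.map_smul]
  have hiff : ∀ x : Fin n → A, (∑ i, x i • (⇑g ∘ b₀) i = 0) ↔ ∃ c, x = T *ᵥ c := by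
    intro x
    rw [key]
    constructor
    · intro h
      obtain ⟨y, hy⟩ := (hex _).mp h
      refine ⟨b₁.repr y, ?_⟩
      rw [hT, LinearMap.toMatrix_mulVec_repr, hy, Module.Basis.repr_sum_self]
    · rintro ⟨c, rfl⟩
      set y := ∑ j, c j • b₁ j with hy
      have hc : ⇑(b₁.repr y) = c := Module.Basis.repr_sum_self b₁ c
      have h1 : T *ᵥ c = ⇑(b₀.repr (ρ y)) := by
        rw [← hc, hT, LinearMap.toMatrix_mulVec_repr]
      rw [h1]
      have h2 : ∑ i, (b₀.repr (ρ y)) i • b₀ i = ρ y := Module.Basis.sum_repr b₀ (ρ y)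
      rw [h2]
      exact (hex (ρ y)).mpr ⟨y, rfl⟩
  refine le_antisymm (Ideal.span_le.mpr ?_) (Ideal.span_le.mpr ?_)
  · rintro r ⟨B, hB, rfl⟩
    choose c hc using fun j => (hiff (fun i => B i j)).mp (hB j)
    set C : Matrix (Fin n) (Fin n) A := fun p j => c j p with hC
    have hBTC : B = T * C := by
      ext i j
      rw [Matrix.mul_apply]
      have := congrFun (hc j) i
      rw [this, Matrix.mulVec, dotProduct]
    rw [hBTC, Matrix.det_mul]
    exact Ideal.mem_span_singleton'.mpr ⟨C.det, by rw [mul_comm]⟩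
  · rintro r rfl
    refine Ideal.subset_span ⟨T, fun j => ?_, rfl⟩
    refine (hiff _).mpr ⟨Pi.single j 1, ?_⟩
    funext i
    rw [Matrix.mulVec, dotProduct]
    simp [Pi.single_apply]
end SquarePres


/-- If `M` has a presentation `P₁ →^ρ P₀ → M → 0` with `P₀, P₁` finitely
generated projective of equal local ranks at every maximal ideal, then the 0-th Fitting
ideal of `M` is locally principal, generated at each prime `𝔪` by the determinant of the
localization `ρ_𝔪` (computed in bases of the localized — hence free — modules). -/
theorem fittingIdeal_locally_principal_of_locally_quadratic_presentation
    (R : Type*) [CommRing R]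
    (M P₀ P₁ : Type*) [AddCommGroup M] [Module R M]
    [AddCommGroup P₀] [Module R P₀] [AddCommGroup P₁] [Module R P₁]
    [Module.Finite R P₀] [Module.Projective R P₀]
    [Module.Finite R P₁] [Module.Projective R P₁]
    (ρ : P₁ →ₗ[R] P₀) (g : P₀ →ₗ[R] M)
    (hg : Function.Surjective g) (hexact : Function.Exact ρ g)
    (hrank : ∀ (𝔪 : Ideal R) [𝔪.IsMaximal],
      Module.finrank (Localization 𝔪.primeCompl) (LocalizedModule 𝔪.primeCompl P₀) =
        Module.finrank (Localization 𝔪.primeCompl) (LocalizedModule 𝔪.primeCompl P₁)) :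
    ∀ (𝔪 : Ideal R) [𝔪.IsPrime],
      ∃ (n : ℕ)
        (b₁ : Module.Basis (Fin n) (Localization 𝔪.primeCompl) (LocalizedModule 𝔪.primeCompl P₁))
        (b₀ : Module.Basis (Fin n) (Localization 𝔪.primeCompl) (LocalizedModule 𝔪.primeCompl P₀)),
        Ideal.map (algebraMap R (Localization 𝔪.primeCompl)) (fittingIdeal0 R M) =
          Ideal.span
            {Matrix.det (LinearMap.toMatrix b₁ b₀ (LocalizedModule.map 𝔪.primeCompl ρ))} := by
  intro 𝔪 h𝔪
  -- instances over the local ring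
  haveI : Module.Finite (Localization 𝔪.primeCompl) (LocalizedModule 𝔪.primeCompl P₀) :=
    Module.Finite.of_isLocalizedModule 𝔪.primeCompl (LocalizedModule.mkLinearMap 𝔪.primeCompl P₀)
  haveI : Module.Finite (Localization 𝔪.primeCompl) (LocalizedModule 𝔪.primeCompl P₁) :=
    Module.Finite.of_isLocalizedModule 𝔪.primeCompl (LocalizedModule.mkLinearMap 𝔪.primeCompl P₁)
  haveI : Module.Projective (Localization 𝔪.primeCompl) (LocalizedModule 𝔪.primeCompl P₀) :=
    Module.projective_of_isLocalizedModule 𝔪.primeCompl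
      (LocalizedModule.mkLinearMap 𝔪.primeCompl P₀)
  haveI : Module.Projective (Localization 𝔪.primeCompl) (LocalizedModule 𝔪.primeCompl P₁) :=
    Module.projective_of_isLocalizedModule 𝔪.primeCompl
      (LocalizedModule.mkLinearMap 𝔪.primeCompl P₁)
  haveI : Module.FinitePresentation (Localization 𝔪.primeCompl)
      (LocalizedModule 𝔪.primeCompl P₀) := Module.finitePresentation_of_projective _ _
  haveI : Module.FinitePresentation (Localization 𝔪.primeCompl)
      (LocalizedModule 𝔪.primeCompl P₁) := Module.finitePresentation_of_projective _ _
  haveI : Module.Free (Localization 𝔪.primeCompl) (LocalizedModule 𝔪.primeCompl P₀) :=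
    Module.free_of_flat_of_isLocalRing
  haveI : Module.Free (Localization 𝔪.primeCompl) (LocalizedModule 𝔪.primeCompl P₁) :=
    Module.free_of_flat_of_isLocalRing
  -- equal ranks at the prime 𝔪, via local constancy of rankAtStalk
  have hrk : Module.finrank (Localization 𝔪.primeCompl) (LocalizedModule 𝔪.primeCompl P₁)
      = Module.finrank (Localization 𝔪.primeCompl) (LocalizedModule 𝔪.primeCompl P₀) := by
    haveI : Module.FinitePresentation R P₀ := Module.finitePresentation_of_projective _ _
    haveI : Module.FinitePresentation R P₁ := Module.finitePresentation_of_projective _ _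
    obtain ⟨𝔫, h𝔫max, h𝔫⟩ := 𝔪.exists_le_maximal h𝔪.ne_top
    haveI := h𝔫max
    set p : PrimeSpectrum R := ⟨𝔪, h𝔪⟩ with hp
    set q : PrimeSpectrum R := ⟨𝔫, h𝔫max.isPrime⟩ with hq
    have hcl : q ∈ closure ({p} : Set (PrimeSpectrum R)) :=
      (PrimeSpectrum.le_iff_mem_closure p q).mp h𝔫
    have key : ∀ (f : PrimeSpectrum R → ℕ), IsLocallyConstant f → f p = f q := by
      intro f hf
      have hopen : IsOpen (f ⁻¹' {f q}) := hf {f q}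
      obtain ⟨x, hxU, hxp⟩ := mem_closure_iff.mp hcl _ hopen rfl
      rw [Set.mem_singleton_iff] at hxp
      subst hxp
      exact hxU
    have e0 := key _ (Module.isLocallyConstant_rankAtStalk (R := R) (M := P₀))
    have e1 := key _ (Module.isLocallyConstant_rankAtStalk (R := R) (M := P₁))
    have hq0 : Module.rankAtStalk (R := R) P₀ q
        = Module.finrank (Localization 𝔫.primeCompl) (LocalizedModule 𝔫.primeCompl P₀) := rfl
    have hq1 : Module.rankAtStalk (R := R) P₁ q
        = Module.finrank (Localization 𝔫.primeCompl) (LocalizedModule 𝔫.primeCompl P₁) := rfl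
    have hp0 : Module.rankAtStalk (R := R) P₀ p
        = Module.finrank (Localization 𝔪.primeCompl) (LocalizedModule 𝔪.primeCompl P₀) := rfl
    have hp1 : Module.rankAtStalk (R := R) P₁ p
        = Module.finrank (Localization 𝔪.primeCompl) (LocalizedModule 𝔪.primeCompl P₁) := rfl
    rw [hp0, hq0] at e0
    rw [hp1, hq1] at e1
    rw [e0, e1, hrank 𝔫]
  -- choose bases
  set b₀ : Module.Basis (Fin (Module.finrank (Localization 𝔪.primeCompl)
      (LocalizedModule 𝔪.primeCompl P₀))) (Localization 𝔪.primeCompl)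
      (LocalizedModule 𝔪.primeCompl P₀) :=
    Module.finBasis _ _ with hb₀
  set b₁ := (Module.finBasis (Localization 𝔪.primeCompl)
      (LocalizedModule 𝔪.primeCompl P₁)).reindex (finCongr hrk) with hb₁
  refine ⟨_, b₁, b₀, ?_⟩
  -- localized maps
  have hgs : Function.Surjective (LocalizedModule.map 𝔪.primeCompl g) :=
    LocalizedModule.map_surjective 𝔪.primeCompl g hg
  have hexs : Function.Exact (LocalizedModule.map 𝔪.primeCompl ρ)
      (LocalizedModule.map 𝔪.primeCompl g) :=
    IsLocalizedModule.map_exact 𝔪.primeCompl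
      (LocalizedModule.mkLinearMap 𝔪.primeCompl P₁)
      (LocalizedModule.mkLinearMap 𝔪.primeCompl P₀)
      (LocalizedModule.mkLinearMap 𝔪.primeCompl M) ρ g hexact
  have hu : Submodule.span (Localization 𝔪.primeCompl)
      (Set.range (⇑(LocalizedModule.map 𝔪.primeCompl g) ∘ ⇑b₀)) = ⊤ :=
    span_range_comp_basis (LocalizedModule.map 𝔪.primeCompl g) hgs b₀
  have hmain : Ideal.map (algebraMap R (Localization 𝔪.primeCompl)) (fittingIdeal0 R M)
      = relDetIdeal (Localization 𝔪.primeCompl)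
        (⇑(LocalizedModule.map 𝔪.primeCompl g) ∘ ⇑b₀) := by
    refine le_antisymm (map_fittingIdeal_le _ _ hu) ?_
    haveI : Module.Finite R M := Module.Finite.of_surjective g hg
    obtain ⟨k, w, hw⟩ := Module.Finite.exists_fin (R := R) (M := M)
    have hw' := span_range_mkLinearMap_comp 𝔪.primeCompl w hw
    rw [← fittingIdeal0_eq_relDetIdeal _ hu, fittingIdeal0_eq_relDetIdeal _ hw']
    exact Ideal.span_le.mpr (relDetSet_mk_subset_map 𝔪.primeCompl w hw)
  rw [hmain, relDetIdeal_square (LocalizedModule.map 𝔪.primeCompl ρ)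
    (LocalizedModule.map 𝔪.primeCompl g) hgs hexs b₀ b₁]
end

section
/- Let M be a locally quadratically presented module over a commutative ring R, with presentation P₁ →^ρ P₀ → M → 0 (P₀, P₁ finitely generated projective of equal local ranks). Define the transpose M^tr as the cokernel of the dual map ρ*: P₀* → P₁*, where (-)* = Hom_R(-, R). Then Fitt_R(M^tr) = Fitt_R(M). -/
open Matrix

namespace FittingTranspose

variable {R : Type*} [CommRing R] {M : Type*} [AddCommGroup M] [Module R M]

/-- The ideal of determinants of relation matrices for a fixed map `π : Rⁿ → M`. -/
def fittAux {n : ℕ} (π : (Fin n → R) →ₗ[R] M) : Ideal R :=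
  Ideal.span { r : R | ∃ A : Matrix (Fin n) (Fin n) R,
    (∀ j, π (fun i => A i j) = 0) ∧ r = A.det }

lemma det_mem_fittAux {n : ℕ} {π : (Fin n → R) →ₗ[R] M} {A : Matrix (Fin n) (Fin n) R}
    (h : ∀ j, π (fun i => A i j) = 0) : A.det ∈ fittAux π :=
  Ideal.subset_span ⟨A, h, rfl⟩

lemma fittAux_comp_le {n : ℕ} (π : (Fin n → R) →ₗ[R] M)
    (e : ((Fin n → R) ≃ₗ[R] (Fin n → R))) :
    fittAux (π ∘ₗ e.toLinearMap) ≤ fittAux π := by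
  classical
  rw [fittAux, Ideal.span_le]
  rintro r ⟨A, hA, rfl⟩
  set U := LinearMap.toMatrix' e.toLinearMap with hU
  set V := LinearMap.toMatrix' e.symm.toLinearMap with hV
  have hVU : V * U = 1 := by
    rw [hU, hV, ← LinearMap.toMatrix'_comp]
    have h1 : e.symm.toLinearMap ∘ₗ e.toLinearMap = LinearMap.id := by ext v; simp
    rw [h1, LinearMap.toMatrix'_id]
  have he : ∀ v : Fin n → R, U.mulVec v = e v := by
    intro v
    rw [hU, ← Matrix.toLin'_apply, Matrix.toLin'_toMatrix']
    rfl
  have hcol : ∀ j, π (fun i => (U * A) i j) = 0 := by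
    intro j
    have h2 : (fun i => (U * A) i j) = e (fun i => A i j) := by
      rw [← he]
      funext i
      simp [Matrix.mul_apply, Matrix.mulVec, dotProduct]
    rw [h2]
    simpa using hA j
  have hdet : V.det * U.det = 1 := by rw [← Matrix.det_mul, hVU, Matrix.det_one]
  have h3 : A.det = V.det * (U * A).det := by
    rw [Matrix.det_mul, ← mul_assoc, hdet, one_mul]
  rw [h3]
  exact Ideal.mul_mem_left _ _ (det_mem_fittAux hcol)

lemma fittAux_comp_equiv {n : ℕ} (π : (Fin n → R) →ₗ[R] M)
    (e : ((Fin n → R) ≃ₗ[R] (Fin n → R))) :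
    fittAux (π ∘ₗ e.toLinearMap) = fittAux π := by
  refine le_antisymm (fittAux_comp_le π e) ?_
  have h := fittAux_comp_le (π ∘ₗ e.toLinearMap) e.symm
  have h2 : (π ∘ₗ e.toLinearMap) ∘ₗ e.symm.toLinearMap = π := by ext v; simp
  rwa [h2] at h

lemma fittAux_funLeft_castSucc {n : ℕ} (π : (Fin n → R) →ₗ[R] M) :
    fittAux (π ∘ₗ LinearMap.funLeft R R (Fin.castSucc : Fin n → Fin (n+1))) = fittAux π := by
  classical
  apply le_antisymm
  · rw [fittAux, Ideal.span_le]
    rintro r ⟨A, hA, rfl⟩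
    rw [Matrix.det_succ_row A (Fin.last n)]
    apply Ideal.sum_mem
    intro j _
    apply Ideal.mul_mem_left
    apply det_mem_fittAux
    intro l
    have h := hA (j.succAbove l)
    simp only [LinearMap.comp_apply, LinearMap.funLeft_apply] at h
    simpa [Fin.succAbove_last, Matrix.submatrix_apply, LinearMap.funLeft, Function.comp_def] using h
  · rw [fittAux, Ideal.span_le]
    rintro r ⟨A, hA, rfl⟩
    set B : Matrix (Fin (n+1)) (Fin (n+1)) R := Matrix.of fun i j =>
      if hi : i = Fin.last n then (if j = Fin.last n then 1 else 0)
      else (if hj : j = Fin.last n then 0 else A (i.castPred hi) (j.castPred hj)) with hB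
    have hBlast : ∀ j, B (Fin.last n) j = if j = Fin.last n then 1 else 0 := by
      intro j; simp [hB]
    have hBcast : ∀ (i : Fin n) j, B (Fin.castSucc i) j =
        if hj : j = Fin.last n then 0 else A i (j.castPred hj) := by
      intro i j
      have hi : (Fin.castSucc i) ≠ Fin.last n := (Fin.castSucc_lt_last i).ne
      simp only [hB, Matrix.of_apply, dif_neg hi, Fin.castPred_castSucc]
    have hcols : ∀ j, (π ∘ₗ LinearMap.funLeft R R (Fin.castSucc : Fin n → Fin (n+1)))
        (fun i => B i j) = 0 := by
      intro j
      have key : π (fun i : Fin n => B (Fin.castSucc i) j) = 0 := by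
        by_cases hj : j = Fin.last n
        · have h0 : (fun i : Fin n => B (Fin.castSucc i) j) = (0 : Fin n → R) := by
            funext i; rw [hBcast, dif_pos hj]; simp
          rw [h0, map_zero]
        · have h0 : (fun i : Fin n => B (Fin.castSucc i) j) = fun i => A i (j.castPred hj) := by
            funext i; rw [hBcast, dif_neg hj]
          rw [h0]
          exact hA (j.castPred hj)
      simpa [LinearMap.funLeft_apply, LinearMap.funLeft, Function.comp_def] using key
    have hdet : B.det = A.det := by
      rw [Matrix.det_succ_row B (Fin.last n)]
      rw [Finset.sum_eq_single (Fin.last n)]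
      · have hsub : B.submatrix (Fin.last n).succAbove (Fin.last n).succAbove = A := by
          ext k l
          rw [Matrix.submatrix_apply, Fin.succAbove_last, hBcast]
          rw [dif_neg (Fin.castSucc_lt_last l).ne, Fin.castPred_castSucc]
        rw [hsub, hBlast, if_pos rfl]
        have : (-1 : R) ^ ((Fin.last n : ℕ) + (Fin.last n : ℕ)) = 1 :=
          Even.neg_one_pow ⟨_, rfl⟩
        rw [this, one_mul, one_mul]
      · intro j _ hj
        rw [hBlast, if_neg hj, mul_zero, zero_mul]
      · intro h; exact absurd (Finset.mem_univ _) h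
    rw [← hdet]
    exact det_mem_fittAux hcols

lemma fittAux_funLeft_castAdd {n : ℕ} (π : (Fin n → R) →ₗ[R] M) (m : ℕ) :
    fittAux (π ∘ₗ LinearMap.funLeft R R (Fin.castAdd m : Fin n → Fin (n+m))) = fittAux π := by
  induction m with
  | zero =>
    have : π ∘ₗ LinearMap.funLeft R R (Fin.castAdd 0 : Fin n → Fin (n+0)) = π := by
      ext v
      simp only [LinearMap.comp_apply, LinearMap.funLeft_apply]
      congr 1
    rw [this]
  | succ m ih =>
    have hsplit : π ∘ₗ LinearMap.funLeft R R (Fin.castAdd (m+1) : Fin n → Fin (n+(m+1))) =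
        (π ∘ₗ LinearMap.funLeft R R (Fin.castAdd m : Fin n → Fin (n+m))) ∘ₗ
          LinearMap.funLeft R R (Fin.castSucc : Fin (n+m) → Fin (n+m+1)) := by
      ext v
      simp only [LinearMap.comp_apply, LinearMap.funLeft_apply]
      congr 1
    rw [hsplit, fittAux_funLeft_castSucc, ih]

lemma fittAux_funLeft_equiv {N N' : ℕ} (π : (Fin N → R) →ₗ[R] M) (e : Fin N ≃ Fin N') :
    fittAux (π ∘ₗ LinearMap.funLeft R R (e : Fin N → Fin N')) = fittAux π := by
  classical
  apply le_antisymm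
  · rw [fittAux, Ideal.span_le]
    rintro r ⟨A, hA, rfl⟩
    rw [← Matrix.det_submatrix_equiv_self e A]
    apply det_mem_fittAux
    intro j
    have h := hA (e j)
    simp only [LinearMap.comp_apply, LinearMap.funLeft_apply] at h
    simpa [Matrix.submatrix_apply, LinearMap.funLeft, Function.comp_def] using h
  · rw [fittAux, Ideal.span_le]
    rintro r ⟨A, hA, rfl⟩
    rw [← Matrix.det_submatrix_equiv_self e.symm A]
    apply det_mem_fittAux
    intro j
    show π (fun i => A (e.symm (e i)) (e.symm j)) = 0
    simp only [Equiv.symm_apply_apply]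
    exact hA (e.symm j)

section Pair

variable {n m : ℕ} (π : (Fin n → R) →ₗ[R] M) (π' : (Fin m → R) →ₗ[R] M)

/-- extension by zero into the first block -/
noncomputable def ext₁ : (Fin n → R) →ₗ[R] (Fin (n+m) → R) :=
  LinearMap.pi (fun i => Fin.addCases (motive := fun _ => ((Fin n → R) →ₗ[R] R))
    (fun i₀ => LinearMap.proj i₀) (fun _ => 0) i)

/-- extension by zero into the second block -/
noncomputable def ext₂ : (Fin m → R) →ₗ[R] (Fin (n+m) → R) :=
  LinearMap.pi (fun i => Fin.addCases (motive := fun _ => ((Fin m → R) →ₗ[R] R))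
    (fun _ => 0) (fun i₀ => LinearMap.proj i₀) i)

lemma ext₁_castAdd (v : Fin n → R) (i : Fin n) : ext₁ (n := n) (m := m) v (Fin.castAdd m i) = v i := by
  simp [ext₁, LinearMap.pi_apply]

lemma ext₁_natAdd (v : Fin n → R) (i : Fin m) : ext₁ (n := n) (m := m) v (Fin.natAdd n i) = 0 := by
  simp [ext₁, LinearMap.pi_apply]

lemma ext₂_castAdd (v : Fin m → R) (i : Fin n) : ext₂ (n := n) (m := m) v (Fin.castAdd m i) = 0 := by
  simp [ext₂, LinearMap.pi_apply]

lemma ext₂_natAdd (v : Fin m → R) (i : Fin m) : ext₂ (n := n) (m := m) v (Fin.natAdd n i) = v i := by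
  simp [ext₂, LinearMap.pi_apply]

lemma fittAux_pair (hπ : Function.Surjective π) :
    fittAux (π ∘ₗ LinearMap.funLeft R R (Fin.castAdd m)
      + π' ∘ₗ LinearMap.funLeft R R (Fin.natAdd n)) = fittAux π := by
  haveI : Module.Projective R (Fin m → R) := inferInstance
  obtain ⟨φ, hφ⟩ := Module.projective_lifting_property π π' hπ
  set rest₁ : (Fin (n+m) → R) →ₗ[R] (Fin n → R) := LinearMap.funLeft R R (Fin.castAdd m) with hrest₁
  set rest₂ : (Fin (n+m) → R) →ₗ[R] (Fin m → R) := LinearMap.funLeft R R (Fin.natAdd n) with hrest₂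
  set N : (Fin (n+m) → R) →ₗ[R] (Fin (n+m) → R) := ext₁ ∘ₗ φ ∘ₗ rest₂ with hN
  have hNN : ∀ v, N (N v) = 0 := by
    intro v
    have h0 : rest₂ (N v) = 0 := by
      funext j
      show (N v) (Fin.natAdd n j) = 0
      exact ext₁_natAdd _ _
    show ext₁ (φ (rest₂ (N v))) = 0
    rw [h0, map_zero, map_zero]
  set e : (Fin (n+m) → R) ≃ₗ[R] (Fin (n+m) → R) :=
    LinearEquiv.ofLinear (LinearMap.id + N) (LinearMap.id - N)
      (by
        refine LinearMap.ext fun v => ?_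
        simp only [LinearMap.comp_apply, LinearMap.sub_apply, LinearMap.add_apply,
          LinearMap.id_apply, map_sub, map_add, hNN v]
        abel)
      (by
        refine LinearMap.ext fun v => ?_
        simp only [LinearMap.comp_apply, LinearMap.sub_apply, LinearMap.add_apply,
          LinearMap.id_apply, map_sub, map_add, hNN v]
        abel) with he
  have hcomp : (π ∘ₗ rest₁) ∘ₗ e.toLinearMap
      = π ∘ₗ rest₁ + π' ∘ₗ LinearMap.funLeft R R (Fin.natAdd n) := by
    refine LinearMap.ext fun v => ?_
    show π (rest₁ (v + N v)) = π (rest₁ v) + π' (rest₂ v)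
    rw [map_add, map_add]
    congr 1
    have h1 : rest₁ (N v) = φ (rest₂ v) := by
      funext i
      show (N v) (Fin.castAdd m i) = φ (rest₂ v) i
      exact ext₁_castAdd _ _
    rw [h1, ← LinearMap.comp_apply, hφ]
  rw [← hcomp, fittAux_comp_equiv, fittAux_funLeft_castAdd]

lemma fittAux_pair' (hπ' : Function.Surjective π') :
    fittAux (π ∘ₗ LinearMap.funLeft R R (Fin.castAdd m)
      + π' ∘ₗ LinearMap.funLeft R R (Fin.natAdd n)) = fittAux π' := by
  obtain ⟨φ, hφ⟩ := Module.projective_lifting_property π' π hπ'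
  set rest₁ : (Fin (n+m) → R) →ₗ[R] (Fin n → R) := LinearMap.funLeft R R (Fin.castAdd m) with hrest₁
  set rest₂ : (Fin (n+m) → R) →ₗ[R] (Fin m → R) := LinearMap.funLeft R R (Fin.natAdd n) with hrest₂
  set N : (Fin (n+m) → R) →ₗ[R] (Fin (n+m) → R) := ext₂ ∘ₗ φ ∘ₗ rest₁ with hN
  have hNN : ∀ v, N (N v) = 0 := by
    intro v
    have h0 : rest₁ (N v) = 0 := by
      funext j
      show (N v) (Fin.castAdd m j) = 0
      exact ext₂_castAdd _ _
    show ext₂ (φ (rest₁ (N v))) = 0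
    rw [h0, map_zero, map_zero]
  set e : (Fin (n+m) → R) ≃ₗ[R] (Fin (n+m) → R) :=
    LinearEquiv.ofLinear (LinearMap.id + N) (LinearMap.id - N)
      (by
        refine LinearMap.ext fun v => ?_
        simp only [LinearMap.comp_apply, LinearMap.sub_apply, LinearMap.add_apply,
          LinearMap.id_apply, map_sub, map_add, hNN v]
        abel)
      (by
        refine LinearMap.ext fun v => ?_
        simp only [LinearMap.comp_apply, LinearMap.sub_apply, LinearMap.add_apply,
          LinearMap.id_apply, map_sub, map_add, hNN v]
        abel) with he
  have hcomp : (π' ∘ₗ rest₂) ∘ₗ e.toLinearMap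
      = π ∘ₗ rest₁ + π' ∘ₗ rest₂ := by
    refine LinearMap.ext fun v => ?_
    show π' (rest₂ (v + N v)) = π (rest₁ v) + π' (rest₂ v)
    rw [map_add, map_add]
    rw [add_comm (π (rest₁ v))]
    congr 1
    have h1 : rest₂ (N v) = φ (rest₁ v) := by
      funext i
      show (N v) (Fin.natAdd n i) = φ (rest₁ v) i
      exact ext₂_natAdd _ _
    rw [h1, ← LinearMap.comp_apply, hφ]
  have hchain : π' ∘ₗ rest₂ = (π' ∘ₗ LinearMap.funLeft R R (Fin.castAdd n)) ∘ₗ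
      LinearMap.funLeft R R (⇑(finAddFlip : Fin (m+n) ≃ Fin (n+m))) := by
    refine LinearMap.ext fun v => ?_
    show π' (fun j => v (Fin.natAdd n j)) = π' (fun j => v (finAddFlip (Fin.castAdd n j)))
    congr 1
    funext j
    rw [finAddFlip_apply_castAdd]
  rw [← hcomp, fittAux_comp_equiv, hchain, fittAux_funLeft_equiv, fittAux_funLeft_castAdd]

end Pair

theorem fittAux_eq_fittAux {n m : ℕ} (π : (Fin n → R) →ₗ[R] M) (π' : (Fin m → R) →ₗ[R] M)
    (hπ : Function.Surjective π) (hπ' : Function.Surjective π') :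
    fittAux π = fittAux π' :=
  (fittAux_pair π π' hπ).symm.trans (fittAux_pair' π π' hπ')

theorem fittingIdeal0_eq_fittAux {n : ℕ} (π : (Fin n → R) →ₗ[R] M)
    (hπ : Function.Surjective π) :
    fittingIdeal0 R M = fittAux π := by
  apply le_antisymm
  · rw [fittingIdeal0, Ideal.span_le]
    rintro r ⟨k, π', A, hsurj, hrel, rfl⟩
    rw [← fittAux_eq_fittAux π' π hsurj hπ]
    exact det_mem_fittAux hrel
  · rw [fittAux, Ideal.span_le]
    rintro r ⟨A, hrel, rfl⟩
    exact Ideal.subset_span ⟨n, π, A, hπ, hrel, rfl⟩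

/-- If `MM` has a presentation by free modules of the same finite rank, the Fitting ideal is
generated by the determinant of the presenting matrix. -/
theorem fittingIdeal0_eq_span_det {L : Type*} [CommRing L] {N₁ N₀ MM : Type*}
    [AddCommGroup N₁] [Module L N₁] [AddCommGroup N₀] [Module L N₀]
    [AddCommGroup MM] [Module L MM]
    (φ : N₁ →ₗ[L] N₀) (q : N₀ →ₗ[L] MM) (hq : Function.Surjective q)
    (hex : Function.Exact φ q) {r : ℕ} (b₁ : Module.Basis (Fin r) L N₁) (b₀ : Module.Basis (Fin r) L N₀) :
    fittingIdeal0 L MM = Ideal.span {(LinearMap.toMatrix b₁ b₀ φ).det} := by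
  classical
  set π : (Fin r → L) →ₗ[L] MM := q ∘ₗ (b₀.equivFun.symm : (Fin r → L) ≃ₗ[L] N₀).toLinearMap
    with hπdef
  have hπ : Function.Surjective π := hq.comp (LinearEquiv.surjective _)
  rw [fittingIdeal0_eq_fittAux π hπ]
  set S := LinearMap.toMatrix b₁ b₀ φ with hS
  apply le_antisymm
  · rw [fittAux, Ideal.span_le]
    rintro x ⟨A, hA, rfl⟩
    have hker : ∀ j, ∃ y, φ y = b₀.equivFun.symm (fun i => A i j) := by
      intro j
      have h := hA j
      simp only [hπdef, LinearMap.comp_apply, LinearEquiv.coe_coe] at h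
      exact (hex _).mp h
    choose y hy using hker
    set B : Matrix (Fin r) (Fin r) L := Matrix.of fun k j => b₁.repr (y j) k with hB
    have hSB : S * B = A := by
      ext i j
      have h1 : φ (y j) = ∑ k, b₁.repr (y j) k • φ (b₁ k) := by
        conv_lhs => rw [← Module.Basis.sum_repr b₁ (y j)]
        rw [map_sum]
        simp_rw [LinearMap.map_smul]
      have h2 : b₀.repr (φ (y j)) i = ∑ k, b₁.repr (y j) k * b₀.repr (φ (b₁ k)) i := by
        rw [h1, map_sum, Finsupp.finset_sum_apply]
        refine Finset.sum_congr rfl fun k _ => ?_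
        rw [_root_.map_smul, Finsupp.smul_apply, smul_eq_mul]
      have h3 : b₀.repr (φ (y j)) i = A i j := by
        rw [hy j]
        have : b₀.repr (b₀.equivFun.symm (fun i => A i j)) = b₀.equivFun (b₀.equivFun.symm (fun i => A i j)) := by
          rw [Module.Basis.equivFun_apply]
        rw [show (b₀.repr (b₀.equivFun.symm fun i => A i j)) i
            = b₀.equivFun (b₀.equivFun.symm (fun i => A i j)) i from by rw [Module.Basis.equivFun_apply],
          LinearEquiv.apply_symm_apply]
      rw [Matrix.mul_apply, ← h3, h2]
      refine Finset.sum_congr rfl fun k _ => ?_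
      rw [hB, hS, Matrix.of_apply, LinearMap.toMatrix_apply, mul_comm]
    rw [← hSB, Matrix.det_mul]
    exact Ideal.mul_mem_right _ _ (Ideal.subset_span rfl)
  · rw [Ideal.span_le, Set.singleton_subset_iff]
    apply det_mem_fittAux
    intro j
    have hcol : (fun i => S i j) = b₀.equivFun (φ (b₁ j)) := by
      funext i
      rw [hS, LinearMap.toMatrix_apply, Module.Basis.equivFun_apply]
    simp only [hπdef, LinearMap.comp_apply, LinearEquiv.coe_coe, hcol,
      LinearEquiv.symm_apply_apply]
    exact hex.apply_apply_eq_zero (b₁ j)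

theorem toMatrix_dualMap' {L : Type*} [CommRing L] {N₁ N₀ : Type*}
    [AddCommGroup N₁] [Module L N₁] [AddCommGroup N₀] [Module L N₀]
    {r : ℕ} (b₁ : Module.Basis (Fin r) L N₁) (b₀ : Module.Basis (Fin r) L N₀) (φ : N₁ →ₗ[L] N₀) :
    LinearMap.toMatrix b₀.dualBasis b₁.dualBasis φ.dualMap = (LinearMap.toMatrix b₁ b₀ φ)ᵀ := by
  ext i j
  rw [LinearMap.toMatrix_apply, Module.Basis.dualBasis_repr, LinearMap.dualMap_apply,
    Module.Basis.dualBasis_apply, Matrix.transpose_apply, LinearMap.toMatrix_apply]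

section Localization

variable {R : Type*} [CommRing R] (S : Submonoid R)
variable {M : Type*} [AddCommGroup M] [Module R M]

/-- Componentwise localization map on `Fin k → R`. -/
noncomputable def mkPi (k : ℕ) : (Fin k → R) →ₗ[R] (Fin k → Localization S) :=
  (Algebra.linearMap R (Localization S)).compLeft (Fin k)

lemma mkPi_apply (k : ℕ) (v : Fin k → R) (i : Fin k) :
    mkPi S k v i = algebraMap R (Localization S) (v i) := rfl

instance isLocalizedModule_mkPi (k : ℕ) : IsLocalizedModule S (mkPi S k) := by
  constructor
  · intro s
    rw [Module.End.isUnit_iff]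
    have hb : Function.Bijective (fun x : Localization S => s • x) := by
      have := (Module.End.isUnit_iff ((algebraMap R
        (Module.End R (Localization S))) s)).mp
          (IsLocalizedModule.map_units (Algebra.linearMap R (Localization S)) s)
      exact this
    constructor
    · intro v w h
      funext i
      exact hb.1 (congrFun h i)
    · intro w
      refine ⟨fun i => Classical.choose (hb.2 (w i)), funext fun i => ?_⟩
      exact Classical.choose_spec (hb.2 (w i))
  · intro y
    obtain ⟨b, hb⟩ := IsLocalization.exist_integer_multiples_of_finite S y
    have h : ∀ i, ∃ r : R, algebraMap R (Localization S) r = b • y i := fun i => hb i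
    choose v hv using h
    exact ⟨⟨v, b⟩, funext fun i => by
      simp only [Pi.smul_apply]
      exact (hv i).symm⟩
  · intro x y h
    have h' : ∀ i, ∃ c : S, (c : R) * x i = (c : R) * y i := by
      intro i
      exact (IsLocalization.eq_iff_exists S (Localization S)).mp (congrFun h i)
    choose c hc using h'
    refine ⟨∏ i, c i, funext fun i => ?_⟩
    simp only [Pi.smul_apply, Submonoid.smul_def, smul_eq_mul, Submonoid.coe_finset_prod]
    rw [← Finset.prod_erase_mul Finset.univ (fun j => ((c j : R))) (Finset.mem_univ i),
      mul_assoc, mul_assoc, hc i]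

theorem fittingIdeal0_map_eq {k : ℕ} (π : (Fin k → R) →ₗ[R] M)
    (hπ : Function.Surjective π) :
    Ideal.map (algebraMap R (Localization S)) (fittingIdeal0 R M)
      = fittingIdeal0 (Localization S) (LocalizedModule S M) := by
  classical
  set L := Localization S with hLdef
  set f := mkPi S k with hfdef
  set g := LocalizedModule.mkLinearMap S M with hgdef
  set πL : (Fin k → L) →ₗ[L] LocalizedModule S M :=
    IsLocalizedModule.mapExtendScalars S f g L π with hπL
  have hπLapp : ∀ v : Fin k → R, πL (f v) = LocalizedModule.mk (π v) 1 := by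
    intro v
    rw [hπL, IsLocalizedModule.mapExtendScalars_apply_apply, IsLocalizedModule.map_apply]
    rfl
  have hπLsurj : Function.Surjective πL := by
    have h := IsLocalizedModule.map_surjective S f g π hπ
    intro z
    obtain ⟨w, hw⟩ := h z
    exact ⟨w, by rw [hπL, IsLocalizedModule.mapExtendScalars_apply_apply]; exact hw⟩
  rw [fittingIdeal0_eq_fittAux π hπ, fittingIdeal0_eq_fittAux πL hπLsurj]
  apply le_antisymm
  · rw [fittAux, Ideal.map_span, Ideal.span_le]
    rintro x ⟨y, ⟨A, hA, rfl⟩, rfl⟩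
    rw [RingHom.map_det]
    apply det_mem_fittAux
    intro j
    have hc : (fun i => (RingHom.mapMatrix (algebraMap R L) A) i j) = f (fun i => A i j) := rfl
    rw [hc, hπLapp, hA j, LocalizedModule.zero_mk]
  · rw [fittAux, Ideal.span_le]
    rintro x ⟨A, hA, rfl⟩
    obtain ⟨b, hb⟩ := IsLocalization.exist_integer_multiples_of_finite S
      (fun p : Fin k × Fin k => A p.1 p.2)
    have h : ∀ p : Fin k × Fin k, ∃ r : R, algebraMap R L r = b • A p.1 p.2 :=
      fun p => hb p
    choose v hv using h
    have hcol : ∀ j, ∃ t : S, t • (π (fun i => v (i, j))) = 0 := by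
      intro j
      have h1 : f (fun i => v (i, j)) = b • (fun i => A i j) := by
        funext i
        rw [mkPi_apply, hv (i, j)]
        rfl
      have h2 : πL (f fun i => v (i, j)) = 0 := by
        rw [h1]
        have : (b • (fun i => A i j) : Fin k → L) = (b : R) • (fun i => A i j) := by
          funext i; simp [Submonoid.smul_def, Algebra.smul_def]
        rw [this, LinearMap.map_smul_of_tower, hA j, smul_zero]
      rw [hπLapp] at h2
      exact (IsLocalizedModule.eq_zero_iff S g).mp h2
    choose t ht using hcol
    set W : Matrix (Fin k) (Fin k) R := Matrix.of fun i j => (t j : R) * v (i, j) with hWdef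
    have hW : ∀ j, π (fun i => W i j) = 0 := by
      intro j
      have h1 : (fun i => W i j) = (t j : R) • (fun i => v (i, j)) := by
        funext i; simp [hWdef, smul_eq_mul]
      rw [h1, _root_.map_smul]
      have := ht j
      rwa [Submonoid.smul_def] at this
    have hdet : algebraMap R L W.det ∈ Ideal.map (algebraMap R L) (fittAux π) :=
      Ideal.mem_map_of_mem _ (det_mem_fittAux hW)
    rw [RingHom.map_det] at hdet
    have hWA : (RingHom.mapMatrix (algebraMap R L) W : Matrix (Fin k) (Fin k) L)
        = Matrix.of fun i j => (fun j => algebraMap R L ((t j : R)) * algebraMap R L b) j * A i j := by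
      ext i j
      simp only [RingHom.mapMatrix_apply, Matrix.map_apply, hWdef, Matrix.of_apply]
      rw [_root_.map_mul, hv (i, j)]
      rw [Submonoid.smul_def, Algebra.smul_def]
      ring
    rw [hWA, Matrix.det_mul_row] at hdet
    have hmem : (∏ j, (t j : R) * (b : R)) ∈ S :=
      Submonoid.prod_mem S (fun j _ => S.mul_mem (t j).2 b.2)
    have hunit : IsUnit (∏ j, algebraMap R L ((t j : R)) * algebraMap R L b) := by
      have heq : (∏ j, algebraMap R L ((t j : R)) * algebraMap R L b)
          = algebraMap R L (∏ j, (t j : R) * (b : R)) := by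
        rw [map_prod]
        exact Finset.prod_congr rfl fun j _ => (map_mul _ _ _).symm
      rw [heq]
      exact IsLocalization.map_units L ⟨_, hmem⟩
    exact (Ideal.unit_mul_mem_iff_mem _ hunit).mp hdet

end Localization

section Dual

variable {R : Type*} [CommRing R] (S : Submonoid R)

/-- The natural map from the localization of the dual to the dual of the localization. -/
noncomputable def dualLoc (P : Type*) [AddCommGroup P] [Module R P] :
    Module.Dual R P →ₗ[R] Module.Dual (Localization S) (LocalizedModule S P) :=
  IsLocalizedModule.mapExtendScalars S (LocalizedModule.mkLinearMap S P)
    (Algebra.linearMap R (Localization S)) (Localization S)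

variable {P₀ P₁ : Type*} [AddCommGroup P₀] [Module R P₀] [AddCommGroup P₁] [Module R P₁]

lemma dualLoc_isLocalizedModule (P : Type*) [AddCommGroup P] [Module R P]
    [Module.Finite R P] [Module.Projective R P] :
    IsLocalizedModule S (dualLoc S P) := by
  haveI := Module.finitePresentation_of_projective R P
  exact Module.FinitePresentation.isLocalizedModule_mapExtendScalars S
    (LocalizedModule.mkLinearMap S P) (Algebra.linearMap R (Localization S)) (Localization S)

lemma map_dualMap [Module.Finite R P₀] [Module.Projective R P₀]
    [Module.Finite R P₁] [Module.Projective R P₁] (ρ : P₁ →ₗ[R] P₀) :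
    haveI := dualLoc_isLocalizedModule S P₀
    haveI := dualLoc_isLocalizedModule S P₁
    IsLocalizedModule.map S (dualLoc S P₀) (dualLoc S P₁) (ρ.dualMap)
      = ((LocalizedModule.map S ρ).dualMap).restrictScalars R := by
  haveI := dualLoc_isLocalizedModule S P₀
  haveI := dualLoc_isLocalizedModule S P₁
  apply IsLocalizedModule.ext S (dualLoc S P₀)
    (IsLocalizedModule.map_units (dualLoc S P₁))
  rw [IsLocalizedModule.map_comp]
  refine LinearMap.ext fun h => ?_
  apply LinearMap.restrictScalars_injective R
  apply IsLocalizedModule.ext S (LocalizedModule.mkLinearMap S P₁)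
    (IsLocalizedModule.map_units (Algebra.linearMap R (Localization S)))
  refine LinearMap.ext fun x => ?_
  show (dualLoc S P₁) (ρ.dualMap h) (LocalizedModule.mk x 1)
    = ((LocalizedModule.map S ρ).dualMap) ((dualLoc S P₀) h) (LocalizedModule.mk x 1)
  have h1 : (dualLoc S P₁) (ρ.dualMap h) (LocalizedModule.mk x 1)
      = algebraMap R (Localization S) (h (ρ x)) := by
    rw [dualLoc, IsLocalizedModule.mapExtendScalars_apply_apply,
      show (LocalizedModule.mk x 1 : LocalizedModule S P₁)
        = LocalizedModule.mkLinearMap S P₁ x from rfl,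
      IsLocalizedModule.map_apply]
    rfl
  rw [h1]
  rw [LinearMap.dualMap_apply]
  rw [show ((LocalizedModule.map S ρ) (LocalizedModule.mk x 1) : LocalizedModule S P₀)
    = LocalizedModule.mk (ρ x) 1 from LocalizedModule.map_mk S ρ x 1]
  rw [dualLoc, IsLocalizedModule.mapExtendScalars_apply_apply,
    show (LocalizedModule.mk (ρ x) 1 : LocalizedModule S P₀)
      = LocalizedModule.mkLinearMap S P₀ (ρ x) from rfl,
    IsLocalizedModule.map_apply]
  rfl

end Dual

section DualFinite

variable {R : Type*} [CommRing R]

lemma dual_finite (P : Type*) [AddCommGroup P] [Module R P]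
    [Module.Finite R P] [Module.Projective R P] :
    Module.Finite R (Module.Dual R P) := by
  obtain ⟨k, π, hπ⟩ := Module.Finite.exists_fin' R P
  obtain ⟨s, hs⟩ := Module.projective_lifting_property π LinearMap.id hπ
  have hsurj : Function.Surjective (s.dualMap : Module.Dual R (Fin k → R) →ₗ[R] Module.Dual R P) := by
    intro φ
    refine ⟨π.dualMap φ, ?_⟩
    refine LinearMap.ext fun x => ?_
    show φ (π (s x)) = φ x
    rw [show π (s x) = (π ∘ₗ s) x from rfl, hs]
    rfl
  haveI : Module.Finite R (Module.Dual R (Fin k → R)) := Module.Finite.linearMap _ _ _ _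
  exact Module.Finite.of_surjective s.dualMap hsurj

end DualFinite

end FittingTranspose

open FittingTranspose

/-- If `M` has a locally quadratic presentation `P₁ →^ρ P₀ → M → 0`
(`P₀, P₁` finitely generated projective of equal local ranks at every prime), then the
transpose `M^tr := coker(ρ* : P₀* → P₁*)` satisfies `Fitt_R(M^tr) = Fitt_R(M)`. -/
theorem fittingIdeal_transpose_eq
    (R : Type*) [CommRing R]
    (M P₀ P₁ : Type*) [AddCommGroup M] [Module R M]
    [AddCommGroup P₀] [Module R P₀] [AddCommGroup P₁] [Module R P₁]
    [Module.Finite R P₀] [Module.Projective R P₀]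
    [Module.Finite R P₁] [Module.Projective R P₁]
    (ρ : P₁ →ₗ[R] P₀) (g : P₀ →ₗ[R] M)
    (hg : Function.Surjective g) (hexact : Function.Exact ρ g)
    (hrank : ∀ (𝔭 : Ideal R) [𝔭.IsPrime],
      Module.finrank (Localization 𝔭.primeCompl) (LocalizedModule 𝔭.primeCompl P₀) =
        Module.finrank (Localization 𝔭.primeCompl) (LocalizedModule 𝔭.primeCompl P₁)) :
    fittingIdeal0 R (Module.Dual R P₁ ⧸ LinearMap.range (ρ.dualMap)) = fittingIdeal0 R M := by
  classical
  haveI hMfin : Module.Finite R M := Module.Finite.of_surjective g hg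
  haveI hDfin : Module.Finite R (Module.Dual R P₁) := dual_finite P₁
  haveI hTfin : Module.Finite R (Module.Dual R P₁ ⧸ LinearMap.range (ρ.dualMap)) :=
    Module.Finite.of_surjective (LinearMap.range (ρ.dualMap)).mkQ (Submodule.mkQ_surjective _)
  obtain ⟨nM, πM, hπM⟩ := Module.Finite.exists_fin' R M
  obtain ⟨nT, πT, hπT⟩ :=
    Module.Finite.exists_fin' R (Module.Dual R P₁ ⧸ LinearMap.range (ρ.dualMap))
  apply Ideal.eq_of_localization_maximal
  intro P hP
  haveI : P.IsPrime := hP.isPrime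
  rw [fittingIdeal0_map_eq P.primeCompl πT hπT, fittingIdeal0_map_eq P.primeCompl πM hπM]
  set Sp := P.primeCompl with hSp
  haveI i1 : Module.Finite (Localization Sp) (LocalizedModule Sp P₀) :=
    Module.Finite.of_isLocalizedModule Sp (LocalizedModule.mkLinearMap Sp P₀)
  haveI i2 : Module.Finite (Localization Sp) (LocalizedModule Sp P₁) :=
    Module.Finite.of_isLocalizedModule Sp (LocalizedModule.mkLinearMap Sp P₁)
  haveI i3 : Module.Projective (Localization Sp) (LocalizedModule Sp P₀) :=
    Module.projective_of_isLocalizedModule Sp (LocalizedModule.mkLinearMap Sp P₀)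
  haveI i4 : Module.Projective (Localization Sp) (LocalizedModule Sp P₁) :=
    Module.projective_of_isLocalizedModule Sp (LocalizedModule.mkLinearMap Sp P₁)
  haveI i5 : Module.FinitePresentation (Localization Sp) (LocalizedModule Sp P₀) :=
    Module.finitePresentation_of_projective _ _
  haveI i6 : Module.FinitePresentation (Localization Sp) (LocalizedModule Sp P₁) :=
    Module.finitePresentation_of_projective _ _
  haveI i7 : Module.Free (Localization Sp) (LocalizedModule Sp P₀) :=
    Module.free_of_flat_of_isLocalRing
  haveI i8 : Module.Free (Localization Sp) (LocalizedModule Sp P₁) :=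
    Module.free_of_flat_of_isLocalRing
  have hr : Module.finrank (Localization Sp) (LocalizedModule Sp P₁)
      = Module.finrank (Localization Sp) (LocalizedModule Sp P₀) := (hrank P).symm
  set b₀ : Module.Basis (Fin (Module.finrank (Localization Sp) (LocalizedModule Sp P₀)))
      (Localization Sp) (LocalizedModule Sp P₀) := Module.finBasis _ _ with hb₀
  set b₁ : Module.Basis (Fin (Module.finrank (Localization Sp) (LocalizedModule Sp P₀)))
      (Localization Sp) (LocalizedModule Sp P₁) :=
    (Module.finBasis _ _).reindex (finCongr hr) with hb₁
  set ρ' := LocalizedModule.map Sp ρ with hρ'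
  have hg' : Function.Surjective (LocalizedModule.map Sp g) :=
    LocalizedModule.map_surjective Sp g hg
  have hex' : Function.Exact ρ' (LocalizedModule.map Sp g) :=
    LocalizedModule.map_exact Sp ρ g hexact
  have hM : fittingIdeal0 (Localization Sp) (LocalizedModule Sp M)
      = Ideal.span {(LinearMap.toMatrix b₁ b₀ ρ').det} :=
    fittingIdeal0_eq_span_det ρ' (LocalizedModule.map Sp g) hg' hex' b₁ b₀
  haveI hd0 := dualLoc_isLocalizedModule Sp P₀
  haveI hd1 := dualLoc_isLocalizedModule Sp P₁
  set q : Module.Dual R P₁ →ₗ[R] (Module.Dual R P₁ ⧸ LinearMap.range ρ.dualMap) :=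
    (LinearMap.range ρ.dualMap).mkQ with hq
  set qT := IsLocalizedModule.mapExtendScalars Sp (dualLoc Sp P₁)
    (LocalizedModule.mkLinearMap Sp (Module.Dual R P₁ ⧸ LinearMap.range ρ.dualMap))
    (Localization Sp) q with hqT
  have hqTsurj : Function.Surjective qT := by
    have h := IsLocalizedModule.map_surjective Sp (dualLoc Sp P₁)
      (LocalizedModule.mkLinearMap Sp (Module.Dual R P₁ ⧸ LinearMap.range ρ.dualMap)) q
      (Submodule.mkQ_surjective _)
    intro z
    obtain ⟨w, hw⟩ := h z
    exact ⟨w, by rw [hqT, IsLocalizedModule.mapExtendScalars_apply_apply]; exact hw⟩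
  have hexT : Function.Exact (ρ'.dualMap) qT := by
    have h := IsLocalizedModule.map_exact Sp (dualLoc Sp P₀) (dualLoc Sp P₁)
      (LocalizedModule.mkLinearMap Sp (Module.Dual R P₁ ⧸ LinearMap.range ρ.dualMap))
      ρ.dualMap q (LinearMap.exact_map_mkQ_range ρ.dualMap)
    have hc1 : ⇑(IsLocalizedModule.map Sp (dualLoc Sp P₀) (dualLoc Sp P₁) ρ.dualMap)
        = ⇑(ρ'.dualMap) := by
      rw [map_dualMap Sp ρ]
      rfl
    have hc2 : ⇑(IsLocalizedModule.map Sp (dualLoc Sp P₁)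
        (LocalizedModule.mkLinearMap Sp (Module.Dual R P₁ ⧸ LinearMap.range ρ.dualMap)) q)
        = ⇑qT := by
      funext x
      rw [hqT, IsLocalizedModule.mapExtendScalars_apply_apply]
    rw [← hc1, ← hc2]
    exact h
  have hT : fittingIdeal0 (Localization Sp)
      (LocalizedModule Sp (Module.Dual R P₁ ⧸ LinearMap.range ρ.dualMap))
      = Ideal.span {(LinearMap.toMatrix b₀.dualBasis b₁.dualBasis ρ'.dualMap).det} :=
    fittingIdeal0_eq_span_det ρ'.dualMap qT hqTsurj hexT b₀.dualBasis b₁.dualBasis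
  rw [hM, hT, toMatrix_dualMap', Matrix.det_transpose]
end

section
/- Let G be a finite abelian group, R a quotient ring of ℤ[G] which is free as a ℤ-module, and P →^ι F → X → 0 an exact sequence of ℤ[G]-modules with F free of rank n and P projective of rank n. If Fitt_R(X ⊗_{ℤ[G]} R) = xR with x a non-zero-divisor of R, then the induced map ι_R: P ⊗_{ℤ[G]} R → F ⊗_{ℤ[G]} R is injective; in particular X ⊗_{ℤ[G]} R has projective dimension 1 over R. -/
open scoped TensorProduct

/-- The 0-th Fitting ideal annihilates the module. -/
lemma fittingIdeal0_smul_eq_zero {R : Type*} [CommRing R] {M : Type*} [AddCommGroup M]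
    [Module R M] {r : R} (hr : r ∈ fittingIdeal0 R M) (m : M) : r • m = 0 := by
  classical
  have hle : fittingIdeal0 R M ≤ Module.annihilator R M := by
    rw [fittingIdeal0, Ideal.span_le]
    rintro r' ⟨n, π, A, hsurj, hcols, rfl⟩
    rw [SetLike.mem_coe, Module.mem_annihilator]
    intro m
    obtain ⟨v, rfl⟩ := hsurj m
    have h1 : A.det • v = A.mulVec (A.adjugate.mulVec v) := by
      rw [Matrix.mulVec_mulVec, Matrix.mul_adjugate, Matrix.smul_mulVec,
        Matrix.one_mulVec]
    have h2 : A.mulVec (A.adjugate.mulVec v)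
        = ∑ j, (A.adjugate.mulVec v) j • (fun i => A i j) := by
      funext i
      simp [Matrix.mulVec, dotProduct, Finset.sum_apply, mul_comm]
    calc A.det • π v = π (A.det • v) := (map_smul π _ _).symm
      _ = π (∑ j, (A.adjugate.mulVec v) j • (fun i => A i j)) := by rw [h1, h2]
      _ = 0 := by
          rw [map_sum]
          simp [map_smul, hcols]
  exact Module.mem_annihilator.mp (hle hr) m

/-- A projective module has no torsion with respect to non-zero-divisors. -/
lemma smul_cancel_of_projective {R M : Type*} [CommRing R] [AddCommGroup M] [Module R M]
    [h : Module.Projective R M] {c : R} (hc : c ∈ nonZeroDivisors R) {m : M}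
    (hm : c • m = 0) : m = 0 := by
  obtain ⟨s, hs⟩ := h.out
  have h1 : c • s m = 0 := by rw [← map_smul, hm, map_zero]
  have h2 : s m = 0 := by
    ext a
    have h3 : c * (s m) a = 0 := by
      have := DFunLike.congr_fun h1 a
      simpa [smul_eq_mul] using this
    have h4 : (s m) a * c = 0 := by rwa [mul_comm]
    simpa using (mem_nonZeroDivisors_iff.mp hc).2 _ h4
  have := hs m
  rw [h2, map_zero] at this
  exact this.symm

set_option maxHeartbeats 1000000 in
set_option synthInstance.maxHeartbeats 400000 in
/-- A finitely generated projective module of constant local rank `n` becomes free of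
rank `n` after base change to any local algebra. -/
lemma auxBasisOfLocal {ZG : Type*} [CommRing ZG] {P : Type*} [AddCommGroup P]
    [Module ZG P] [Module.Finite ZG P] [Module.Projective ZG P] {n : ℕ}
    (hPrank : ∀ (𝔭 : Ideal ZG) [𝔭.IsPrime],
      Module.finrank (Localization 𝔭.primeCompl) (LocalizedModule 𝔭.primeCompl P) = n)
    (L : Type*) [CommRing L] [Algebra ZG L] [IsLocalRing L] :
    Nonempty (Module.Basis (Fin n) L (L ⊗[ZG] P)) := by
  classical
  haveI hmaxprime : (IsLocalRing.maximalIdeal L).IsPrime :=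
    (IsLocalRing.maximalIdeal.isMaximal L).isPrime
  set 𝔭 : Ideal ZG :=
    Ideal.comap (algebraMap ZG L) (IsLocalRing.maximalIdeal L) with h𝔭def
  haveI h𝔭 : 𝔭.IsPrime := Ideal.IsPrime.comap _
  have hAunits : ∀ y : 𝔭.primeCompl, IsUnit (algebraMap ZG L y) := by
    rintro ⟨y, hy⟩
    exact IsLocalRing.notMem_maximalIdeal.mp (fun hmem => hy (Ideal.mem_comap.mpr hmem))
  letI : Algebra (Localization 𝔭.primeCompl) L :=
    (IsLocalization.lift (S := Localization 𝔭.primeCompl) hAunits).toAlgebra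
  letI : IsScalarTower ZG (Localization 𝔭.primeCompl) L :=
    IsScalarTower.of_algebraMap_eq (fun zg => (IsLocalization.lift_eq hAunits zg).symm)
  haveI : Module.Finite (Localization 𝔭.primeCompl)
      ((Localization 𝔭.primeCompl) ⊗[ZG] P) :=
    Module.Finite.base_change ZG (Localization 𝔭.primeCompl) P
  let c4 : (Localization 𝔭.primeCompl) ⊗[ZG] P ≃ₗ[Localization 𝔭.primeCompl]
      LocalizedModule 𝔭.primeCompl P :=
    (IsLocalizedModule.isBaseChange 𝔭.primeCompl (Localization 𝔭.primeCompl)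
      (LocalizedModule.mkLinearMap 𝔭.primeCompl P)).equiv
  haveI : Module.Finite (Localization 𝔭.primeCompl) (LocalizedModule 𝔭.primeCompl P) :=
    Module.Finite.equiv c4
  haveI : Module.Projective (Localization 𝔭.primeCompl) (LocalizedModule 𝔭.primeCompl P) :=
    Module.Projective.of_equiv c4
  haveI : Module.FinitePresentation (Localization 𝔭.primeCompl)
      (LocalizedModule 𝔭.primeCompl P) := by
    exact Module.finitePresentation_of_projective _ _
  haveI : Module.Free (Localization 𝔭.primeCompl) (LocalizedModule 𝔭.primeCompl P) := by
    exact Module.free_of_flat_of_isLocalRing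
  let bP : Module.Basis (Fin n) (Localization 𝔭.primeCompl) (LocalizedModule 𝔭.primeCompl P) :=
    (Module.finBasis (Localization 𝔭.primeCompl) (LocalizedModule 𝔭.primeCompl P)).reindex
      (finCongr (hPrank 𝔭))
  let c3 : L ⊗[ZG] P ≃ₗ[L] L ⊗[Localization 𝔭.primeCompl]
      ((Localization 𝔭.primeCompl) ⊗[ZG] P) :=
    (TensorProduct.AlgebraTensorModule.cancelBaseChange ZG
      (Localization 𝔭.primeCompl) L L P).symm
  let c5 := LinearEquiv.baseChange (Localization 𝔭.primeCompl) L _ _ c4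
  exact ⟨(Algebra.TensorProduct.basis L bP).map (c3.trans c5).symm⟩

set_option maxHeartbeats 1000000 in
set_option synthInstance.maxHeartbeats 400000 in
/-- If `V ≃ W × U` with `U` finitely generated projective, and `V`, `W` both become free of
rank `n` at the localization of `Q` at a maximal ideal `𝔮`, then the localization of `U`
at `𝔮` vanishes. -/
lemma auxSubsingletonLocalized {Q : Type*} [CommRing Q] {V W U : Type*}
    [AddCommGroup V] [Module Q V] [AddCommGroup W] [Module Q W]
    [AddCommGroup U] [Module Q U] [Module.Finite Q U] [Module.Projective Q U]
    {n : ℕ} (e : V ≃ₗ[Q] W × U) (𝔮 : Ideal Q) [h𝔮 : 𝔮.IsMaximal]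
    (bV : Module.Basis (Fin n) (Localization.AtPrime 𝔮) ((Localization.AtPrime 𝔮) ⊗[Q] V))
    (bW : Module.Basis (Fin n) (Localization.AtPrime 𝔮) ((Localization.AtPrime 𝔮) ⊗[Q] W)) :
    Subsingleton (LocalizedModule 𝔮.primeCompl U) := by
  classical
  haveI := h𝔮.isPrime
  set L := Localization.AtPrime 𝔮 with hLdef
  have hrkV : Module.finrank L (L ⊗[Q] V) = n := by
    rw [Module.finrank_eq_card_basis bV, Fintype.card_fin]
  have hrkW : Module.finrank L (L ⊗[Q] W) = n := by
    rw [Module.finrank_eq_card_basis bW, Fintype.card_fin]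
  let eL : L ⊗[Q] V ≃ₗ[Q] (L ⊗[Q] W) × (L ⊗[Q] U) :=
    ((LinearEquiv.baseChange Q L _ _ e).restrictScalars Q).trans
      (TensorProduct.prodRight Q Q L W U)
  let eL' := LinearEquiv.extendScalarsOfIsLocalization 𝔮.primeCompl L eL
  haveI : Module.Finite L (L ⊗[Q] U) := Module.Finite.base_change Q L U
  haveI : Module.Projective L (L ⊗[Q] U) := inferInstance
  haveI : Module.FinitePresentation L (L ⊗[Q] U) := by
    exact Module.finitePresentation_of_projective _ _
  haveI : Module.Free L (L ⊗[Q] U) := by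
    exact Module.free_of_flat_of_isLocalRing
  haveI : Module.Free L (L ⊗[Q] W) := Module.Free.of_basis bW
  haveI : Module.Finite L (L ⊗[Q] W) := Module.Finite.of_basis bW
  have hsum : n = n + Module.finrank L (L ⊗[Q] U) := by
    conv_lhs => rw [← hrkV]
    rw [eL'.finrank_eq, Module.finrank_prod, hrkW]
  have hzero : Module.finrank L (L ⊗[Q] U) = 0 := by omega
  haveI : Subsingleton (L ⊗[Q] U) := by
    have hcard : Fintype.card (Module.Free.ChooseBasisIndex L (L ⊗[Q] U)) = 0 := by
      rw [← Module.finrank_eq_card_chooseBasisIndex]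
      exact hzero
    haveI : IsEmpty (Module.Free.ChooseBasisIndex L (L ⊗[Q] U)) :=
      Fintype.card_eq_zero_iff.mp hcard
    haveI : Subsingleton ((Module.Free.ChooseBasisIndex L (L ⊗[Q] U)) →₀ L) :=
      ⟨fun f g => Finsupp.ext (fun a => isEmptyElim a)⟩
    exact (Module.Free.chooseBasis L (L ⊗[Q] U)).repr.toEquiv.subsingleton
  let eKloc : L ⊗[Q] U ≃ₗ[L] LocalizedModule 𝔮.primeCompl U :=
    (IsLocalizedModule.isBaseChange 𝔮.primeCompl L
      (LocalizedModule.mkLinearMap 𝔮.primeCompl U)).equiv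
  exact eKloc.symm.toEquiv.subsingleton

set_option maxHeartbeats 8000000 in
set_option maxSynthPendingDepth 3 in
set_option synthInstance.maxHeartbeats 1000000 in
/-- Let `G` be a finite abelian group, `R` a quotient ring of `ℤ[G]` which
is free as a `ℤ`-module, and `P →^ι F → X → 0` exact with `F` free of rank `n` and `P`
projective of (constant local) rank `n` over `ℤ[G]`. If `Fitt_R(X_R) = xR` with `x` a
non-zero-divisor, then `ι_R : P_R → F_R` is injective; in particular `X_R` has projective
dimension `≤ 1`, witnessed by a length-one resolution. -/
theorem baseChange_injective_of_fitting_principal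
    (G : Type*) [CommGroup G] [Finite G]
    (R : Type*) [CommRing R] [Algebra (MonoidAlgebra ℤ G) R]
    (hquot : Function.Surjective (algebraMap (MonoidAlgebra ℤ G) R))
    [Module.Free ℤ R]
    (P F X : Type*)
    [AddCommGroup P] [Module (MonoidAlgebra ℤ G) P]
    [AddCommGroup F] [Module (MonoidAlgebra ℤ G) F]
    [AddCommGroup X] [Module (MonoidAlgebra ℤ G) X]
    [Module.Finite (MonoidAlgebra ℤ G) P] [Module.Projective (MonoidAlgebra ℤ G) P]
    (n : ℕ) (bF : Module.Basis (Fin n) (MonoidAlgebra ℤ G) F)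
    (hPrank : ∀ (𝔭 : Ideal (MonoidAlgebra ℤ G)) [𝔭.IsPrime],
      Module.finrank (Localization 𝔭.primeCompl) (LocalizedModule 𝔭.primeCompl P) = n)
    (ι : P →ₗ[MonoidAlgebra ℤ G] F) (π : F →ₗ[MonoidAlgebra ℤ G] X)
    (hπ : Function.Surjective π) (hexact : Function.Exact ι π)
    (x : R) (hx : x ∈ nonZeroDivisors R)
    (hfitt : fittingIdeal0 R (R ⊗[MonoidAlgebra ℤ G] X) = Ideal.span {x}) :
    Function.Injective (LinearMap.baseChange R ι) ∧
      ∃ (m : ℕ) (s : (Fin m → R) →ₗ[R] (R ⊗[MonoidAlgebra ℤ G] X)),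
        Function.Surjective s ∧ Module.Projective R (LinearMap.ker s) := by
  classical
  -- x annihilates X_R
  have hxann : ∀ m : R ⊗[MonoidAlgebra ℤ G] X, x • m = 0 := by
    intro m
    refine fittingIdeal0_smul_eq_zero (R := R) (M := R ⊗[MonoidAlgebra ℤ G] X) ?_ m
    rw [hfitt]
    exact Ideal.mem_span_singleton_self x
  -- exactness after base change to R
  have hexactR : Function.Exact (LinearMap.baseChange R ι) (LinearMap.baseChange R π) := by
    simpa only [LinearMap.baseChange_eq_ltensor] using lTensor_exact R hexact hπ
  have hπR : Function.Surjective (LinearMap.baseChange R π) := by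
    simpa only [LinearMap.baseChange_eq_ltensor] using LinearMap.lTensor_surjective R hπ
  set Q := Localization (nonZeroDivisors R) with hQdef
  -- exactness after base change to Q
  have hexactQ : Function.Exact (LinearMap.baseChange Q (LinearMap.baseChange R ι))
      (LinearMap.baseChange Q (LinearMap.baseChange R π)) := by
    simpa only [LinearMap.baseChange_eq_ltensor] using lTensor_exact Q hexactR hπR
  -- X_Q is trivial
  haveI hXQ : Subsingleton (Q ⊗[R] (R ⊗[MonoidAlgebra ℤ G] X)) := by
    have hux : IsUnit (algebraMap R Q x) := IsLocalization.map_units Q ⟨x, hx⟩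
    have hz : ∀ z : Q ⊗[R] (R ⊗[MonoidAlgebra ℤ G] X), z = 0 := by
      intro z
      have hxz : x • z = 0 := by
        induction z using TensorProduct.induction_on with
        | zero => simp
        | tmul q m => rw [TensorProduct.smul_tmul', TensorProduct.smul_tmul, hxann m,
            TensorProduct.tmul_zero]
        | add a b ha hb => rw [smul_add, ha, hb, add_zero]
      have hxz' : (algebraMap R Q x) • z = 0 := by rw [algebraMap_smul]; exact hxz
      obtain ⟨u, hu⟩ := hux
      calc z = (↑u⁻¹ : Q) • ((u : Q) • z) := by rw [smul_smul, Units.inv_mul, one_smul]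
        _ = 0 := by rw [hu, hxz', smul_zero]
    exact ⟨fun a b => by rw [hz a, hz b]⟩
  set ιQ := LinearMap.baseChange Q (LinearMap.baseChange R ι) with hιQdef
  have hsurjQ : Function.Surjective ιQ := fun w => (hexactQ w).mp (Subsingleton.elim _ _)
  -- a splitting of ιQ
  let bFR : Module.Basis (Fin n) R (R ⊗[MonoidAlgebra ℤ G] F) := Algebra.TensorProduct.basis R bF
  let bFQ : Module.Basis (Fin n) Q (Q ⊗[R] (R ⊗[MonoidAlgebra ℤ G] F)) :=
    Algebra.TensorProduct.basis Q bFR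
  haveI : Module.Free Q (Q ⊗[R] (R ⊗[MonoidAlgebra ℤ G] F)) := Module.Free.of_basis bFQ
  obtain ⟨σ, hσ⟩ := Module.projective_lifting_property ιQ LinearMap.id hsurjQ
  have hσ' : ∀ w, ιQ (σ w) = w := fun w => DFunLike.congr_fun hσ w
  set K := LinearMap.ker ιQ with hKdef
  set ρ : Q ⊗[R] (R ⊗[MonoidAlgebra ℤ G] P) →ₗ[Q] Q ⊗[R] (R ⊗[MonoidAlgebra ℤ G] P) :=
    (LinearMap.id : Q ⊗[R] (R ⊗[MonoidAlgebra ℤ G] P) →ₗ[Q]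
      Q ⊗[R] (R ⊗[MonoidAlgebra ℤ G] P)) - σ ∘ₗ ιQ with hρdef
  have hρmem : ∀ p, ρ p ∈ K := by
    intro p
    rw [hKdef, LinearMap.mem_ker, hρdef, LinearMap.sub_apply, LinearMap.id_apply,
      LinearMap.comp_apply, map_sub, hσ', sub_self]
  have hρK : ∀ k : K, ρ (k : Q ⊗[R] (R ⊗[MonoidAlgebra ℤ G] P)) = k := by
    rintro ⟨k, hk⟩
    have hk0 : ιQ k = 0 := hk
    rw [hρdef, LinearMap.sub_apply, LinearMap.id_apply, LinearMap.comp_apply, hk0,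
      map_zero, sub_zero]
  -- finiteness and projectivity of K
  haveI : Module.Finite R (R ⊗[MonoidAlgebra ℤ G] P) :=
    Module.Finite.base_change (MonoidAlgebra ℤ G) R P
  haveI : Module.Finite Q (Q ⊗[R] (R ⊗[MonoidAlgebra ℤ G] P)) :=
    Module.Finite.base_change R Q (R ⊗[MonoidAlgebra ℤ G] P)
  have hrange : LinearMap.range ρ = K :=
    le_antisymm (by rintro _ ⟨p, rfl⟩; exact hρmem p) (fun k hk => ⟨k, hρK ⟨k, hk⟩⟩)
  haveI hKfin : Module.Finite Q K :=
    hrange ▸ (Module.Finite.range ρ)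
  haveI hKproj : Module.Projective Q K := by
    refine Module.Projective.of_split (M := Q ⊗[R] (R ⊗[MonoidAlgebra ℤ G] P))
      K.subtype (ρ.codRestrict K hρmem) ?_
    apply LinearMap.ext
    intro k
    exact Subtype.ext (hρK k)
  -- the splitting linear equivalence
  let fwd : Q ⊗[R] (R ⊗[MonoidAlgebra ℤ G] P) →ₗ[Q]
      (Q ⊗[R] (R ⊗[MonoidAlgebra ℤ G] F)) × K :=
    LinearMap.prod ιQ (ρ.codRestrict K hρmem)
  let bwd : (Q ⊗[R] (R ⊗[MonoidAlgebra ℤ G] F)) × K →ₗ[Q]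
      Q ⊗[R] (R ⊗[MonoidAlgebra ℤ G] P) :=
    σ ∘ₗ (LinearMap.fst Q _ K) + K.subtype ∘ₗ (LinearMap.snd Q _ K)
  have h1 : fwd ∘ₗ bwd = LinearMap.id := by
    apply LinearMap.ext
    rintro ⟨w, k⟩
    have hk0 : ιQ (k : Q ⊗[R] (R ⊗[MonoidAlgebra ℤ G] P)) = 0 := k.2
    have hι : ιQ (σ w + (k : Q ⊗[R] (R ⊗[MonoidAlgebra ℤ G] P))) = w := by
      rw [map_add, hσ', hk0, add_zero]
    have hρ2 : ρ (σ w + (k : Q ⊗[R] (R ⊗[MonoidAlgebra ℤ G] P)))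
        = (k : Q ⊗[R] (R ⊗[MonoidAlgebra ℤ G] P)) := by
      rw [hρdef, LinearMap.sub_apply, LinearMap.id_apply, LinearMap.comp_apply, hι]
      exact add_sub_cancel_left _ _
    refine Prod.ext ?_ (Subtype.ext ?_)
    · exact hι
    · exact hρ2
  have h2 : bwd ∘ₗ fwd = LinearMap.id := by
    apply LinearMap.ext
    intro p
    show σ (ιQ p) + ρ p = p
    rw [hρdef, LinearMap.sub_apply, LinearMap.id_apply, LinearMap.comp_apply]
    abel
  let e : Q ⊗[R] (R ⊗[MonoidAlgebra ℤ G] P) ≃ₗ[Q]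
      (Q ⊗[R] (R ⊗[MonoidAlgebra ℤ G] F)) × K :=
    LinearEquiv.ofLinear fwd bwd h1 h2
  -- K is locally trivial, hence trivial
  haveI hKsub : Subsingleton K := by
    apply Module.subsingleton_of_localization_maximal (R := Q) (M := ↥K)
      (fun 𝔮 _ => LocalizedModule 𝔮.primeCompl ↥K)
      (fun 𝔮 _ => LocalizedModule.mkLinearMap 𝔮.primeCompl ↥K)
    intro 𝔮 h𝔮
    haveI := h𝔮.isPrime
    let L := Localization.AtPrime 𝔮
    let c1 := TensorProduct.AlgebraTensorModule.cancelBaseChange R Q L L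
      (R ⊗[MonoidAlgebra ℤ G] P)
    let c2 := TensorProduct.AlgebraTensorModule.cancelBaseChange (MonoidAlgebra ℤ G) R L L P
    let bV : Module.Basis (Fin n) L (L ⊗[Q] (Q ⊗[R] (R ⊗[MonoidAlgebra ℤ G] P))) :=
      ((auxBasisOfLocal hPrank L).some).map (c1.trans c2).symm
    let bW : Module.Basis (Fin n) L (L ⊗[Q] (Q ⊗[R] (R ⊗[MonoidAlgebra ℤ G] F))) :=
      Algebra.TensorProduct.basis L bFQ
    exact auxSubsingletonLocalized (Q := Q)
      (V := Q ⊗[R] (R ⊗[MonoidAlgebra ℤ G] P))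
      (W := Q ⊗[R] (R ⊗[MonoidAlgebra ℤ G] F)) (U := ↥K) e 𝔮 bV bW
  have hinjQ : Function.Injective ιQ := by
    intro a b hab
    have hmem : a - b ∈ K := by
      rw [hKdef, LinearMap.mem_ker, map_sub, hab, sub_self]
    have h0 : ((⟨a - b, hmem⟩ : K) : Q ⊗[R] (R ⊗[MonoidAlgebra ℤ G] P))
        = ((0 : K) : Q ⊗[R] (R ⊗[MonoidAlgebra ℤ G] P)) :=
      congrArg _ (Subsingleton.elim _ _)
    simpa [sub_eq_zero] using h0
  -- injectivity of ι_R
  haveI : IsLocalizedModule (nonZeroDivisors R)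
      (TensorProduct.mk R Q (R ⊗[MonoidAlgebra ℤ G] P) 1) := by
    rw [isLocalizedModule_iff_isBaseChange (nonZeroDivisors R) Q]
    exact TensorProduct.isBaseChange R (R ⊗[MonoidAlgebra ℤ G] P) Q
  have hinjR0 : ∀ p : R ⊗[MonoidAlgebra ℤ G] P, LinearMap.baseChange R ι p = 0 → p = 0 := by
    intro p hp0
    have h0 : ιQ ((1 : Q) ⊗ₜ[R] p) = 0 := by
      rw [hιQdef, LinearMap.baseChange_tmul, hp0, TensorProduct.tmul_zero]
    have hz : (TensorProduct.mk R Q (R ⊗[MonoidAlgebra ℤ G] P) 1) p = 0 := by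
      apply hinjQ
      simpa using h0
    obtain ⟨s, hs⟩ := (IsLocalizedModule.eq_zero_iff (nonZeroDivisors R) _).mp hz
    exact smul_cancel_of_projective s.2 hs
  have hinjR : Function.Injective (LinearMap.baseChange R ι) := by
    intro a b hab
    have : LinearMap.baseChange R ι (a - b) = 0 := by rw [map_sub, hab, sub_self]
    have := hinjR0 _ this
    rwa [sub_eq_zero] at this
  let eF : (Fin n → R) ≃ₗ[R] R ⊗[MonoidAlgebra ℤ G] F := bFR.equivFun.symm
  refine ⟨hinjR, n, (LinearMap.baseChange R π) ∘ₗ eF.toLinearMap, ?_, ?_⟩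
  · rw [LinearMap.coe_comp]
    exact hπR.comp eF.surjective
  · have hker : Submodule.map (eF : (Fin n → R) →ₗ[R] R ⊗[MonoidAlgebra ℤ G] F)
        (LinearMap.ker ((LinearMap.baseChange R π) ∘ₗ eF.toLinearMap))
        = LinearMap.ker (LinearMap.baseChange R π) := by
      rw [LinearMap.ker_comp]
      exact Submodule.map_comap_eq_of_surjective eF.surjective _
    let e1 := (eF.submoduleMap
        (LinearMap.ker ((LinearMap.baseChange R π) ∘ₗ eF.toLinearMap))).trans
      (LinearEquiv.ofEq _ _ hker)
    have hkr : LinearMap.ker (LinearMap.baseChange R π)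
        = LinearMap.range (LinearMap.baseChange R ι) := hexactR.linearMap_ker_eq
    let e2 := LinearEquiv.ofEq _ _ hkr
    let e3 := (LinearEquiv.ofInjective _ hinjR).symm
    exact Module.Projective.of_equiv ((e1.trans e2).trans e3).symm
end

section
/- Let G be a finite abelian group with a direct product decomposition of a subgroup G_v = ⟨g₁⟩ × ⋯ × ⟨g_r⟩, let R = ℤ_p[G], β_i = g_i − 1 and α_i = N(⟨g_i⟩) = Σ_k g_i^k. For each 1 ≤ k ≤ r, the R-module K_k = {(y₁,…,y_k) ∈ R^k : Σ_{i=1}^k y_i β_i = 0} is generated by the k(k+1)/2 vectors {α_i e_i : 1 ≤ i ≤ k} ∪ {−β_j e_i + β_i e_j : 1 ≤ i < j ≤ k}, where (e_i) is the standard basis of R^k. -/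
open Finsupp


lemma cyclic_ann {A : Type*} [CommRing A] {Q : Type*} [CommGroup Q]
    (q : Q) (hq : IsOfFinOrder q) (x : MonoidAlgebra A Q)
    (hx : x * (MonoidAlgebra.of A Q q - 1) = 0) :
    ∃ y, x = y * ∑ m ∈ Finset.range (orderOf q), MonoidAlgebra.of A Q (q ^ m) := by
  classical
  have h1 : x * MonoidAlgebra.single q (1:A) = x := by
    have h := hx
    rw [mul_sub, mul_one, sub_eq_zero] at h
    simpa [MonoidAlgebra.of_apply] using h
  have hstep : ∀ a : Q, x.coeff (a * q⁻¹) = x.coeff a := by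
    intro a
    have h2 : (x * MonoidAlgebra.single q (1:A)).coeff a = x.coeff a := by rw [h1]
    simpa [MonoidAlgebra.coeff_mul_single_apply] using h2
  have hpow : ∀ (a : Q) (m : ℕ), x.coeff (a * q ^ m) = x.coeff a := by
    intro a m
    induction m with
    | zero => simp
    | succ m ih =>
      have := hstep (a * q ^ (m+1))
      rw [pow_succ, ← mul_assoc] at this ⊢
      rw [mul_assoc, mul_inv_cancel, mul_one] at this
      rw [← this, ih]
  have hconst : ∀ a b : Q, a⁻¹ * b ∈ Subgroup.zpowers q → x.coeff a = x.coeff b := by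
    intro a b hab
    obtain ⟨m, hm⟩ := hq.mem_powers_iff_mem_zpowers.mpr hab
    simp only at hm
    have hb : b = a * q ^ m := by rw [hm]; group
    rw [hb, hpow]
  set C := Subgroup.zpowers q with hC
  set n := orderOf q with hn
  set y : MonoidAlgebra A Q :=
    MonoidAlgebra.ofCoeff (x.coeff.filter (fun a => a = ((QuotientGroup.mk a : Q ⧸ C)).out)) with hy
  refine ⟨y, ?_⟩
  ext a
  have houtmk : ∀ b : Q, (QuotientGroup.mk ((QuotientGroup.mk b : Q ⧸ C)).out : Q ⧸ C)
      = QuotientGroup.mk b := fun b => Quotient.out_eq _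
  have hmem : ((QuotientGroup.mk a : Q ⧸ C)).out⁻¹ * a ∈ C := by
    rw [← QuotientGroup.eq]; exact houtmk a
  obtain ⟨m₀, hm₀n, hm₀⟩ : ∃ m₀, m₀ ∈ Finset.range n ∧
      q ^ m₀ = ((QuotientGroup.mk a : Q ⧸ C)).out⁻¹ * a := by
    have := hq.mem_zpowers_iff_mem_range_orderOf.mp hmem
    obtain ⟨m₀, hm₀n, h⟩ := Finset.mem_image.mp this
    exact ⟨m₀, hm₀n, h⟩
  have key : (y * ∑ m ∈ Finset.range n, MonoidAlgebra.of A Q (q ^ m)).coeff a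
      = ∑ m ∈ Finset.range n, y.coeff (a * (q ^ m)⁻¹) := by
    rw [Finset.mul_sum, MonoidAlgebra.coeff_sum, Finsupp.finset_sum_apply]
    refine Finset.sum_congr rfl fun m _ => ?_
    simp [MonoidAlgebra.of_apply, MonoidAlgebra.coeff_mul_single_apply]
  have hval : ∀ m ∈ Finset.range n, y.coeff (a * (q ^ m)⁻¹)
      = if m = m₀ then x.coeff a else 0 := by
    intro m _hm
    have hmkeq : (QuotientGroup.mk (a * (q ^ m)⁻¹) : Q ⧸ C) = QuotientGroup.mk a := by
      rw [QuotientGroup.eq]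
      refine Subgroup.mem_zpowers_iff.mpr ⟨(m : ℤ), ?_⟩
      rw [zpow_natCast]; group
    rw [hy, MonoidAlgebra.coeff_ofCoeff, Finsupp.filter_apply]
    by_cases hcond : a * (q ^ m)⁻¹ = ((QuotientGroup.mk (a * (q ^ m)⁻¹) : Q ⧸ C)).out
    · have hqm : q ^ m = ((QuotientGroup.mk a : Q ⧸ C)).out⁻¹ * a := by
        rw [hmkeq] at hcond
        rw [← hcond]; group
      have hmm₀ : m = m₀ := by
        have hlt : m < n := Finset.mem_range.mp _hm
        have hlt₀ : m₀ < n := Finset.mem_range.mp hm₀n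
        exact pow_injOn_Iio_orderOf hlt hlt₀ (hqm.trans hm₀.symm)
      rw [if_pos hcond, if_pos hmm₀]
      refine hconst _ _ ?_
      refine Subgroup.mem_zpowers_iff.mpr ⟨(m : ℤ), ?_⟩
      rw [zpow_natCast, hqm]; group
    · have hne : m ≠ m₀ := by
        intro hmm₀
        apply hcond
        subst hmm₀
        rw [hmkeq, hm₀]
        group
      rw [if_neg hcond, if_neg hne]
  rw [key, Finset.sum_congr rfl hval]
  simp [Finset.mem_range.mp hm₀n]


lemma of_sub_one_mem {A : Type*} [CommRing A] {Γ : Type*} [CommGroup Γ] (s : Set Γ)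
    (h : Γ) (hh : h ∈ Subgroup.closure s) :
    MonoidAlgebra.of A Γ h - 1 ∈
      Ideal.span ((fun t => MonoidAlgebra.of A Γ t - 1) '' s) := by
  induction hh using Subgroup.closure_induction with
  | mem t ht => exact Ideal.subset_span ⟨t, ht, rfl⟩
  | one =>
      have : MonoidAlgebra.of A Γ (1:Γ) - 1 = (0 : MonoidAlgebra A Γ) := by
        rw [map_one, sub_self]
      rw [this]; exact zero_mem _
  | mul a b _ _ ha hb =>
      have : MonoidAlgebra.of A Γ (a * b) - 1 =
          MonoidAlgebra.of A Γ a * (MonoidAlgebra.of A Γ b - 1) +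
            (MonoidAlgebra.of A Γ a - 1) := by
        rw [map_mul]; ring
      rw [this]
      exact add_mem (Ideal.mul_mem_left _ _ hb) ha
  | inv a _ ha =>
      have : MonoidAlgebra.of A Γ a⁻¹ - 1 =
          -MonoidAlgebra.of A Γ a⁻¹ * (MonoidAlgebra.of A Γ a - 1) := by
        have h2 : MonoidAlgebra.of A Γ a⁻¹ * MonoidAlgebra.of A Γ a = 1 := by
          rw [← map_mul, inv_mul_cancel, map_one]
        rw [mul_sub, neg_mul, neg_mul, h2]; ring
      rw [this]
      exact Ideal.mul_mem_left _ _ ha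

lemma ker_sub_span {A : Type*} [CommRing A] {Γ : Type*} [CommGroup Γ] (s : Set Γ)
    (f : MonoidAlgebra A Γ)
    (hf : MonoidAlgebra.mapDomainRingHom A (QuotientGroup.mk' (Subgroup.closure s)) f = 0) :
    f ∈ Ideal.span ((fun t => MonoidAlgebra.of A Γ t - 1) '' s) := by
  classical
  set H := Subgroup.closure s with hH
  set J := Ideal.span ((fun t => MonoidAlgebra.of A Γ t - 1) '' s) with hJ
  set T : Γ ⧸ H → Γ := Quotient.out with hT
  let FF : MonoidAlgebra A Γ → MonoidAlgebra A Γ :=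
    fun f => MonoidAlgebra.mapDomain (fun b => T (QuotientGroup.mk b)) f
  have hFF : ∀ f, FF f = MonoidAlgebra.mapDomain (fun b => T (QuotientGroup.mk b)) f :=
    fun _ => rfl
  have claim1 : ∀ f : MonoidAlgebra A Γ, f - FF f ∈ J := by
    intro f
    refine MonoidAlgebra.induction_on (motive := fun f => f - FF f ∈ J) f ?_ ?_ ?_
    · intro a
      have hsingle : FF (MonoidAlgebra.of A Γ a) =
          MonoidAlgebra.single (T (QuotientGroup.mk a)) 1 := by
        rw [hFF]
        show MonoidAlgebra.mapDomain _ (MonoidAlgebra.single a (1:A)) = _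
        exact MonoidAlgebra.mapDomain_single
      rw [hsingle]
      have hmem : (T (QuotientGroup.mk a))⁻¹ * a ∈ H := by
        rw [← QuotientGroup.eq]
        exact Quotient.out_eq _
      have heq : MonoidAlgebra.of A Γ a -
          MonoidAlgebra.single (T (QuotientGroup.mk a)) (1:A) =
          MonoidAlgebra.single (T (QuotientGroup.mk a)) (1:A) *
            (MonoidAlgebra.of A Γ ((T (QuotientGroup.mk a))⁻¹ * a) - 1) := by
        rw [mul_sub, mul_one, MonoidAlgebra.of_apply, MonoidAlgebra.of_apply,
          MonoidAlgebra.single_mul_single, mul_one, mul_inv_cancel_left]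
      rw [heq]
      exact Ideal.mul_mem_left _ _ (of_sub_one_mem s _ hmem)
    · intro f₁ f₂ h₁ h₂
      have hadd : FF (f₁ + f₂) = FF f₁ + FF f₂ := by
        rw [hFF, hFF, hFF]; exact MonoidAlgebra.mapDomain_add _ _ _
      have heq : f₁ + f₂ - FF (f₁ + f₂) = (f₁ - FF f₁) + (f₂ - FF f₂) := by
        rw [hadd]; ring
      rw [heq]
      exact add_mem h₁ h₂
    · intro r f hf
      have hsmul : FF (r • f) = r • FF f := by
        rw [hFF, hFF]; exact MonoidAlgebra.mapDomain_smul _ r f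
      have heq : r • f - FF (r • f) = r • (f - FF f) := by
        rw [hsmul, smul_sub]
      rw [heq]
      rw [Algebra.smul_def]
      exact Ideal.mul_mem_left _ _ hf
  have claim2 : FF f = 0 := by
    rw [hFF]
    have hcomp : (fun b : Γ => T (QuotientGroup.mk b)) = T ∘ ⇑(QuotientGroup.mk' H) := rfl
    rw [hcomp]
    show MonoidAlgebra.ofCoeff (Finsupp.mapDomain (T ∘ ⇑(QuotientGroup.mk' H)) f.coeff) = 0
    rw [Finsupp.mapDomain_comp]
    have h0 : Finsupp.mapDomain (⇑(QuotientGroup.mk' H)) f.coeff = 0 := congrArg MonoidAlgebra.coeff hf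
    rw [h0, Finsupp.mapDomain_zero]
    rfl
  have hfin := claim1 f
  rwa [claim2, sub_zero] at hfin

lemma step_lemma {A : Type*} [CommRing A] {Γ : Type*} [CommGroup Γ]
    (g₀ : Γ) (hg₀ : IsOfFinOrder g₀) (s : Set Γ)
    (hord : ∀ m : ℕ, g₀ ^ m ∈ Subgroup.closure s → g₀ ^ m = 1)
    (x : MonoidAlgebra A Γ)
    (hx : x * (MonoidAlgebra.of A Γ g₀ - 1) ∈
      Ideal.span ((fun t => MonoidAlgebra.of A Γ t - 1) '' s)) :
    x ∈ Ideal.span (insert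
      (∑ m ∈ Finset.range (orderOf g₀), MonoidAlgebra.of A Γ (g₀ ^ m))
      ((fun t => MonoidAlgebra.of A Γ t - 1) '' s)) := by
  classical
  set H := Subgroup.closure s with hH
  set J := Ideal.span ((fun t => MonoidAlgebra.of A Γ t - 1) '' s) with hJ
  set π := MonoidAlgebra.mapDomainRingHom A (QuotientGroup.mk' H) with hπ
  have hofmap : ∀ a : Γ, π (MonoidAlgebra.of A Γ a)
      = MonoidAlgebra.of A (Γ ⧸ H) (QuotientGroup.mk a) := by
    intro a
    show π (MonoidAlgebra.single a 1) = _
    rw [hπ]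
    show MonoidAlgebra.mapDomain _ (MonoidAlgebra.single a (1:A)) = _
    rw [MonoidAlgebra.mapDomain_single]
    rfl
  have hπJ : ∀ z ∈ J, π z = 0 := by
    intro z hz
    have hle : J ≤ RingHom.ker π := by
      rw [hJ, Ideal.span_le]
      rintro _ ⟨t, ht, rfl⟩
      have htH : t ∈ H := Subgroup.subset_closure ht
      have : (QuotientGroup.mk t : Γ ⧸ H) = 1 := (QuotientGroup.eq_one_iff t).mpr htH
      simp only [RingHom.mem_ker, SetLike.mem_coe, map_sub, map_one, hofmap, this]
      rw [sub_self]
    exact hle hz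
  set q : Γ ⧸ H := QuotientGroup.mk g₀ with hq
  have hmkpow : ∀ m : ℕ, (QuotientGroup.mk (g₀ ^ m) : Γ ⧸ H) = q ^ m := by
    intro m; rw [hq]; rfl
  have horder : orderOf q = orderOf g₀ := by
    refine Nat.dvd_antisymm ?_ ?_
    · refine orderOf_dvd_of_pow_eq_one ?_
      rw [← hmkpow, pow_orderOf_eq_one]
      rfl
    · refine orderOf_dvd_of_pow_eq_one ?_
      have h1 : (QuotientGroup.mk (g₀ ^ orderOf q) : Γ ⧸ H) = 1 := by
        rw [hmkpow, pow_orderOf_eq_one]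
      have h2 : g₀ ^ orderOf q ∈ H := (QuotientGroup.eq_one_iff _).mp h1
      exact hord _ h2
  have hqfin : IsOfFinOrder q := by
    rw [← orderOf_pos_iff, horder]
    exact hg₀.orderOf_pos
  have hπx : π x * (MonoidAlgebra.of A (Γ ⧸ H) q - 1) = 0 := by
    have : π (x * (MonoidAlgebra.of A Γ g₀ - 1)) = 0 := hπJ _ hx
    rwa [map_mul, map_sub, map_one, hofmap] at this
  obtain ⟨y, hy⟩ := cyclic_ann q hqfin (π x) hπx
  set y₀ : MonoidAlgebra A Γ := MonoidAlgebra.mapDomain Quotient.out y with hy₀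
  have hπy₀ : π y₀ = y := by
    rw [hπ]
    show MonoidAlgebra.ofCoeff (Finsupp.mapDomain _ (Finsupp.mapDomain _ y.coeff)) = y
    rw [← Finsupp.mapDomain_comp]
    have : (⇑(QuotientGroup.mk' H) ∘ Quotient.out : Γ ⧸ H → Γ ⧸ H) = id := by
      funext z
      exact Quotient.out_eq z
    rw [this, Finsupp.mapDomain_id]
  set α := ∑ m ∈ Finset.range (orderOf g₀), MonoidAlgebra.of A Γ (g₀ ^ m) with hα
  have hπα : π α = ∑ m ∈ Finset.range (orderOf q), MonoidAlgebra.of A (Γ ⧸ H) (q ^ m) := by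
    rw [hα, map_sum, horder]
    refine Finset.sum_congr rfl fun m _ => ?_
    rw [hofmap, hmkpow]
  have hker : π (x - y₀ * α) = 0 := by
    rw [map_sub, map_mul, hπy₀, hπα, hy, sub_self]
  have hmem : x - y₀ * α ∈ J := ker_sub_span s _ hker
  have hx2 : x = (x - y₀ * α) + y₀ * α := by ring
  rw [hx2]
  refine add_mem ?_ ?_
  · exact Ideal.span_mono (Set.subset_insert _ _) hmem
  · exact Ideal.mul_mem_left _ _ (Ideal.subset_span (Set.mem_insert _ _))

lemma indep_pow_eq_one {G : Type*} [CommGroup G] {r : ℕ} {g : Fin r → G}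
    (hindep : Function.Injective
      (fun x : (∀ i : Fin r, Subgroup.zpowers (g i)) => ∏ i, ((x i : G))))
    (j₀ : Fin r) (s : Set (Fin r)) (hj₀ : j₀ ∉ s)
    (m : ℕ) (hm : g j₀ ^ m ∈ Subgroup.closure ((fun i => g i) '' s)) :
    g j₀ ^ m = 1 := by
  classical
  have coe_single : ∀ (i : Fin r) (a : Subgroup.zpowers (g i)) (j : Fin r),
      ((Pi.mulSingle (M := fun j => Subgroup.zpowers (g j)) i a j : Subgroup.zpowers (g j)) : G) = Pi.mulSingle (M := fun _ : Fin r => G) i ((a : G)) j := by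
    intro i a j
    rcases eq_or_ne j i with rfl | hne
    · rw [Pi.mulSingle_eq_same, Pi.mulSingle_eq_same]
    · rw [Pi.mulSingle_eq_of_ne hne, Pi.mulSingle_eq_of_ne hne, OneMemClass.coe_one]
  have prod_single : ∀ (i : Fin r) (a : Subgroup.zpowers (g i)),
      ∏ j, ((Pi.mulSingle (M := fun j => Subgroup.zpowers (g j)) i a j : Subgroup.zpowers (g j)) : G) = (a : G) := by
    intro i a
    rw [Finset.prod_congr rfl (fun j _ => coe_single i a j)]
    rw [Finset.prod_pi_mulSingle' i ((a : G)) Finset.univ,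
      if_pos (Finset.mem_univ i)]
  have hP : ∀ h ∈ Subgroup.closure ((fun i => g i) '' s),
      ∃ x : ∀ i : Fin r, Subgroup.zpowers (g i),
        x j₀ = 1 ∧ ∏ i, ((x i : G)) = h := by
    intro h hh
    induction hh using Subgroup.closure_induction with
    | mem t ht =>
        obtain ⟨i, hi, rfl⟩ := ht
        refine ⟨Pi.mulSingle (M := fun j => Subgroup.zpowers (g j)) i ⟨g i, Subgroup.mem_zpowers _⟩, ?_, ?_⟩
        · have hne : i ≠ j₀ := fun h => hj₀ (h ▸ hi)
          exact Pi.mulSingle_eq_of_ne (Ne.symm hne) _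
        · exact prod_single i _
    | one => exact ⟨1, rfl, by simp⟩
    | mul a b _ _ ha hb =>
        obtain ⟨x, hx1, hxp⟩ := ha
        obtain ⟨y, hy1, hyp⟩ := hb
        refine ⟨x * y, by rw [Pi.mul_apply, hx1, hy1, mul_one], ?_⟩
        rw [← hxp, ← hyp, ← Finset.prod_mul_distrib]
        rfl
    | inv a _ ha =>
        obtain ⟨x, hx1, hxp⟩ := ha
        refine ⟨x⁻¹, by rw [Pi.inv_apply, hx1, inv_one], ?_⟩
        rw [← hxp, ← Finset.prod_inv_distrib]
        rfl
  obtain ⟨x, hx1, hxp⟩ := hP _ hm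
  have hx' : ∏ i, (((Pi.mulSingle (M := fun j => Subgroup.zpowers (g j)) j₀ ⟨g j₀ ^ m, Subgroup.pow_mem _ (Subgroup.mem_zpowers _) m⟩ :
      ∀ i : Fin r, Subgroup.zpowers (g i)) i : G)) = g j₀ ^ m := prod_single j₀ _
  have heq := hindep (hxp.trans hx'.symm)
  have := congrArg (fun z => ((z j₀ : Subgroup.zpowers (g j₀)) : G)) heq
  simp only [hx1, Pi.mulSingle_eq_same, OneMemClass.coe_one] at this
  exact this.symm

/-- Let `R = ℤ_p[G]` with `G` finite abelian containing a subgroup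
`G_v = ⟨g₁⟩ × ⋯ × ⟨g_r⟩` (internal direct product), `β_i = g_i - 1` and
`α_i = N(⟨g_i⟩)`. For each `k ≤ r`, the solution module
`K_k = {(y₁,…,y_k) ∈ R^k : Σ y_i β_i = 0}` is generated by the vectors
`α_i e_i` (`1 ≤ i ≤ k`) and `-β_j e_i + β_i e_j` (`1 ≤ i < j ≤ k`). -/
theorem relation_module_generators
    (p : ℕ) [Fact p.Prime]
    (G : Type*) [CommGroup G] [Fintype G]
    (r : ℕ) (g : Fin r → G)
    (hindep : Function.Injective
      (fun x : (∀ i : Fin r, Subgroup.zpowers (g i)) => ∏ i, ((x i : G))))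
    (k : ℕ) (hk : k ≤ r)
    (β α : Fin k → MonoidAlgebra ℤ_[p] G)
    (hβ : ∀ i, β i = MonoidAlgebra.of ℤ_[p] G (g (Fin.castLE hk i)) - 1)
    (hα : ∀ i, α i = ∑ m ∈ Finset.range (orderOf (g (Fin.castLE hk i))),
      MonoidAlgebra.of ℤ_[p] G ((g (Fin.castLE hk i)) ^ m)) :
    (Submodule.span (MonoidAlgebra ℤ_[p] G)
        ((Set.range fun i : Fin k => Pi.single i (α i)) ∪
          {y | ∃ i j : Fin k, i < j ∧
            y = Pi.single i (-(β j)) + Pi.single j (β i)}) :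
      Set (Fin k → MonoidAlgebra ℤ_[p] G)) =
      {y : Fin k → MonoidAlgebra ℤ_[p] G | ∑ i, y i * β i = 0} := by
  classical
  set gens : Set (Fin k → MonoidAlgebra ℤ_[p] G) :=
    (Set.range fun i : Fin k => Pi.single i (α i)) ∪
      {y | ∃ i j : Fin k, i < j ∧ y = Pi.single i (-(β j)) + Pi.single j (β i)} with hgens
  have halphabeta : ∀ i : Fin k, α i * β i = 0 := by
    intro i
    rw [hα i, hβ i]
    simp only [map_pow]
    rw [geom_sum_mul, ← map_pow, pow_orderOf_eq_one, map_one, sub_self]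
  have e1 : ∀ (t : Fin k) (v : MonoidAlgebra ℤ_[p] G),
      ∑ i, (Pi.single t v : Fin k → MonoidAlgebra ℤ_[p] G) i * β i = v * β t := by
    intro t v
    rw [Finset.sum_eq_single t (fun b _ hb => by rw [Pi.single_eq_of_ne hb, zero_mul])
      (fun h => absurd (Finset.mem_univ t) h), Pi.single_eq_same]
  apply Set.Subset.antisymm
  · intro y hy
    replace hy : y ∈ Submodule.span (MonoidAlgebra ℤ_[p] G) gens := hy
    show ∑ i, y i * β i = 0
    induction hy using Submodule.span_induction with
    | mem y h =>
        simp only [hgens, Set.mem_union, Set.mem_range, Set.mem_setOf_eq] at h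
        rcases h with ⟨i, rfl⟩ | ⟨i, j, hij, rfl⟩
        · rw [e1, halphabeta]
        · have hexp : ∀ t, (Pi.single i (-(β j)) + Pi.single j (β i)
                : Fin k → MonoidAlgebra ℤ_[p] G) t * β t
              = (Pi.single i (-(β j)) : Fin k → MonoidAlgebra ℤ_[p] G) t * β t
                + (Pi.single j (β i) : Fin k → MonoidAlgebra ℤ_[p] G) t * β t := by
            intro t; rw [Pi.add_apply, add_mul]
          rw [Finset.sum_congr rfl fun t _ => hexp t, Finset.sum_add_distrib, e1, e1]
          rw [neg_mul, mul_comm (β i) (β j), neg_add_cancel]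
    | zero => simp
    | add a b _ _ ha hb =>
        have hexp : ∀ t, (a + b) t * β t = a t * β t + b t * β t := by
          intro t; rw [Pi.add_apply, add_mul]
        rw [Finset.sum_congr rfl fun t _ => hexp t, Finset.sum_add_distrib, ha, hb, add_zero]
    | smul cc a _ ha =>
        have hexp : ∀ t, (cc • a) t * β t = cc * (a t * β t) := by
          intro t; rw [Pi.smul_apply, smul_eq_mul, mul_assoc]
        rw [Finset.sum_congr rfl fun t _ => hexp t, ← Finset.mul_sum, ha, mul_zero]
  · intro y hy
    have hy0 : ∑ i, y i * β i = 0 := hy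
    have key : ∀ m : ℕ, m ≤ k → ∀ y : Fin k → MonoidAlgebra ℤ_[p] G,
        (∀ i : Fin k, m ≤ (i : ℕ) → y i = 0) → (∑ i, y i * β i = 0) →
        y ∈ Submodule.span (MonoidAlgebra ℤ_[p] G) gens := by
      intro m
      induction m with
      | zero =>
          intro _ y hvan _
          have hy0' : y = 0 := funext fun i => hvan i (Nat.zero_le _)
          rw [hy0']
          exact Submodule.zero_mem _
      | succ m ih =>
          intro hm1 y hvan hsum
          have hmk : m < k := hm1
          set M : Fin k := ⟨m, hmk⟩ with hM
          set sG : Set G := (fun i : Fin k => g (Fin.castLE hk i)) '' {i : Fin k | (i : ℕ) < m}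
            with hsG
          set J : Ideal (MonoidAlgebra ℤ_[p] G) :=
            Ideal.span ((fun t => MonoidAlgebra.of ℤ_[p] G t - 1) '' sG) with hJdef
          have himg : (fun t => MonoidAlgebra.of ℤ_[p] G t - 1) '' sG
              = (fun i : Fin k => β i) '' {i : Fin k | (i : ℕ) < m} := by
            rw [hsG, Set.image_image]
            exact Set.image_congr fun i _ => (hβ i).symm
          have hβJ : ∀ i : Fin k, (i : ℕ) < m → β i ∈ J := by
            intro i hi
            rw [hJdef, himg]
            exact Ideal.subset_span ⟨i, hi, rfl⟩
          have herase : ∀ i ∈ Finset.univ.erase M, y i * β i ∈ J := by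
            intro i hi
            rcases lt_or_ge (i : ℕ) m with h | h
            · exact Ideal.mul_mem_left _ _ (hβJ i h)
            · have hne : i ≠ M := Finset.ne_of_mem_erase hi
              have hvne : (i : ℕ) ≠ m := fun hh => hne (Fin.ext hh)
              have hge : m + 1 ≤ (i : ℕ) := Nat.lt_of_le_of_ne h (Ne.symm hvne)
              rw [hvan i hge, zero_mul]
              exact zero_mem _
          have hyM : y M * β M ∈ J := by
            have h := hsum
            rw [← Finset.add_sum_erase _ _ (Finset.mem_univ M)] at h
            rw [eq_neg_of_add_eq_zero_left h]
            exact neg_mem (Ideal.sum_mem _ herase)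
          have hord : ∀ m' : ℕ, g (Fin.castLE hk M) ^ m' ∈ Subgroup.closure sG →
              g (Fin.castLE hk M) ^ m' = 1 := by
            intro m' hm'
            have hsetteq : sG = (fun i => g i) '' (Fin.castLE hk '' {i : Fin k | (i : ℕ) < m}) := by
              rw [hsG, Set.image_image]
            refine indep_pow_eq_one hindep (Fin.castLE hk M)
              (Fin.castLE hk '' {i : Fin k | (i : ℕ) < m}) ?_ m' (by rwa [hsetteq] at hm')
            rintro ⟨i, hi, hie⟩
            have hvm : (i : ℕ) = m := by
              have hcv := congrArg Fin.val hie
              simpa using hcv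
            have hlt : (i : ℕ) < m := hi
            omega
          have hstep := step_lemma (A := ℤ_[p]) (g (Fin.castLE hk M))
            (isOfFinOrder_of_finite _) sG hord (y M) (by rw [← hβ M]; exact hyM)
          rw [← hα M] at hstep
          obtain ⟨z, w, hw, hyMeq⟩ := Ideal.mem_span_insert.mp hstep
          rw [himg] at hw
          obtain ⟨l, hlsupp, hlc⟩ := (Finsupp.mem_span_image_iff_linearCombination (MonoidAlgebra ℤ_[p] G)).mp hw
          set c : Fin k → MonoidAlgebra ℤ_[p] G := fun i => l i with hc
          have hczero : ∀ i : Fin k, ¬ (i : ℕ) < m → c i = 0 := by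
            intro i hi
            by_contra hcne
            exact hi (hlsupp (Finsupp.mem_support_iff.mpr hcne))
          have hcw : ∑ i, c i * β i = w := by
            rw [← hlc, Finsupp.linearCombination_apply,
              Finsupp.sum_fintype l (fun i a => a • β i) (fun i => zero_smul _ _)]
            exact Finset.sum_congr rfl fun i _ => by rw [smul_eq_mul]
          set P : Fin k → MonoidAlgebra ℤ_[p] G := Pi.single M (α M) with hP
          set S : Fin k → MonoidAlgebra ℤ_[p] G :=
            ∑ j, c j • (Pi.single j (-(β M)) + Pi.single M (β j)) with hS
          set y' : Fin k → MonoidAlgebra ℤ_[p] G := y - z • P - S with hy'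
          have hSap : ∀ i, S i = ∑ j, c j * ((Pi.single j (-(β M)) : Fin k → MonoidAlgebra ℤ_[p] G) i + (Pi.single M (β j) : Fin k → MonoidAlgebra ℤ_[p] G) i) := by
            intro i
            rw [hS, Finset.sum_apply]
            exact Finset.sum_congr rfl fun j _ => by
              rw [Pi.smul_apply, Pi.add_apply, smul_eq_mul]
          have hvan' : ∀ i : Fin k, m ≤ (i : ℕ) → y' i = 0 := by
            intro i hi
            rcases eq_or_ne i M with heq | hne
            · subst heq
              have hSM : S M = w := by
                rw [hSap]
                have hterm : ∀ j, c j * ((Pi.single j (-(β M)) : Fin k → MonoidAlgebra ℤ_[p] G) M + (Pi.single M (β j) : Fin k → MonoidAlgebra ℤ_[p] G) M)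
                    = c j * (Pi.single j (-(β M)) : Fin k → MonoidAlgebra ℤ_[p] G) M + c j * β j := by
                  intro j; rw [Pi.single_eq_same, mul_add]
                rw [Finset.sum_congr rfl fun j _ => hterm j, Finset.sum_add_distrib, hcw]
                have hz1 : ∑ j, c j * (Pi.single j (-(β M)) : Fin k → MonoidAlgebra ℤ_[p] G) M = 0 := by
                  rw [Finset.sum_eq_single M
                    (fun b _ hb => by rw [Pi.single_eq_of_ne (Ne.symm hb), mul_zero])
                    (fun hcon => absurd (Finset.mem_univ M) hcon)]
                  have hMv : ¬ ((M : Fin k) : ℕ) < m := by simp [hM]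
                  rw [Pi.single_eq_same, hczero M hMv, zero_mul]
                rw [hz1, zero_add]
              rw [hy', Pi.sub_apply, Pi.sub_apply, Pi.smul_apply, hP, Pi.single_eq_same,
                smul_eq_mul, hSM, hyMeq]
              ring
            · have hvne : (i : ℕ) ≠ m := fun hh => hne (Fin.ext hh)
              have hyi : y i = 0 := hvan i (Nat.lt_of_le_of_ne hi (Ne.symm hvne))
              have hPi : P i = 0 := by rw [hP]; exact Pi.single_eq_of_ne hne _
              have hSi : S i = 0 := by
                rw [hSap]
                refine Finset.sum_eq_zero fun j _ => ?_
                rw [Pi.single_eq_of_ne hne, add_zero]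
                rcases eq_or_ne j i with heq2 | hji
                · rw [heq2, Pi.single_eq_same, hczero i (not_lt.mpr hi), zero_mul]
                · rw [Pi.single_eq_of_ne (Ne.symm hji), mul_zero]
              rw [hy', Pi.sub_apply, Pi.sub_apply, Pi.smul_apply, hyi, hPi, hSi,
                smul_zero, sub_zero, sub_zero]
          have hsum' : ∑ i, y' i * β i = 0 := by
            have hexp : ∀ i, y' i * β i = y i * β i - z * (P i * β i) - S i * β i := by
              intro i
              rw [hy', Pi.sub_apply, Pi.sub_apply, Pi.smul_apply, smul_eq_mul]
              ring
            rw [Finset.sum_congr rfl fun i _ => hexp i, Finset.sum_sub_distrib,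
              Finset.sum_sub_distrib]
            have h1 : ∑ i, z * (P i * β i) = 0 := by
              rw [← Finset.mul_sum, hP, e1, halphabeta, mul_zero]
            have h2 : ∑ i, S i * β i = 0 := by
              have hexp2 : ∀ i, S i * β i
                  = ∑ j, c j * (((Pi.single j (-(β M)) : Fin k → MonoidAlgebra ℤ_[p] G) i + (Pi.single M (β j) : Fin k → MonoidAlgebra ℤ_[p] G) i) * β i) := by
                intro i
                rw [hSap, Finset.sum_mul]
                exact Finset.sum_congr rfl fun j _ => by ring
              rw [Finset.sum_congr rfl fun i _ => hexp2 i, Finset.sum_comm]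
              refine Finset.sum_eq_zero fun j _ => ?_
              have hswap : ∑ i, c j * (((Pi.single j (-(β M)) : Fin k → MonoidAlgebra ℤ_[p] G) i + (Pi.single M (β j) : Fin k → MonoidAlgebra ℤ_[p] G) i) * β i)
                  = c j * ((∑ i, (Pi.single j (-(β M)) : Fin k → MonoidAlgebra ℤ_[p] G) i * β i)
                    + ∑ i, (Pi.single M (β j) : Fin k → MonoidAlgebra ℤ_[p] G) i * β i) := by
                rw [← Finset.mul_sum, ← Finset.sum_add_distrib]
                refine congrArg _ (Finset.sum_congr rfl fun i _ => by ring)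
              rw [hswap, e1, e1]
              have hz2 : -(β M) * β j + β j * β M = 0 := by ring
              rw [hz2, mul_zero]
            rw [hsum, h1, h2, sub_zero, sub_zero]
          have hdiff : y - y' ∈ Submodule.span (MonoidAlgebra ℤ_[p] G) gens := by
            have hrw : y - y' = z • P + S := by rw [hy']; abel
            rw [hrw]
            refine Submodule.add_mem _ ?_ ?_
            · refine Submodule.smul_mem _ _ (Submodule.subset_span ?_)
              rw [hgens, hP]
              exact Or.inl ⟨M, rfl⟩
            · rw [hS]
              refine Submodule.sum_mem _ fun j _ => ?_
              rcases lt_or_ge (j : ℕ) m with h | h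
              · refine Submodule.smul_mem _ _ (Submodule.subset_span ?_)
                rw [hgens]
                exact Or.inr ⟨j, M, Fin.lt_def.mpr h, rfl⟩
              · rw [hczero j (not_lt.mpr h), zero_smul]
                exact zero_mem _
          have hy'mem := ih (Nat.le_of_succ_le hm1) y' hvan' hsum'
          have hfin : y = y' + (y - y') := by abel
          rw [hfin]
          exact Submodule.add_mem _ hy'mem hdiff
    exact key k le_rfl y (fun i hi => absurd hi (not_le.mpr i.isLt)) hy0
end

section
/- Let 𝓡 = ℤ_p[x₁,…,x_k, y₁,…,y_k] and A_k the k × k(k+1)/2 matrix with columns y_i e_i (1 ≤ i ≤ k) and −x_j e_i + x_i e_j (1 ≤ i < j ≤ k). Then every nonzero monomial occurring in any k × k minor of A_k is either equal (up to sign) to y₁y₂⋯y_k or is divisible by x_i y_i for some i ∈ {1,…,k}. -/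
open MvPolynomial

lemma coeff_aeval_keep {σ R : Type*} [CommRing R] [DecidableEq σ]
    (keep : σ → Prop) [DecidablePred keep]
    (d : σ →₀ ℕ) (hd : ∀ v, d v ≠ 0 → keep v) (P : MvPolynomial σ R) :
    coeff d (aeval (fun v => if keep v then X v else 0) P) = coeff d P := by
  conv_rhs => rw [P.as_sum]
  conv_lhs => rw [P.as_sum, map_sum]
  rw [coeff_sum, coeff_sum]
  refine Finset.sum_congr rfl fun m _ => ?_
  by_cases hm : ∀ v ∈ m.support, keep v
  · congr 1
    rw [aeval_monomial, monomial_eq]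
    congr 1
    refine Finsupp.prod_congr fun v hv => ?_
    rw [if_pos (hm v hv)]
  · push_neg at hm
    obtain ⟨v₀, hv₀, hkv₀⟩ := hm
    rw [aeval_monomial]
    rw [Finsupp.prod, Finset.prod_eq_zero hv₀ (by
      rw [if_neg hkv₀]
      exact zero_pow (Finsupp.mem_support_iff.mp hv₀)), mul_zero, coeff_zero,
      coeff_monomial, if_neg]
    intro h
    subst h
    exact hkv₀ (hd v₀ (Finsupp.mem_support_iff.mp hv₀))

/-- Let `𝓡 = ℤ_p[x₁,…,x_k,y₁,…,y_k]` and `A_k` the `k × k(k+1)/2`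
matrix with columns `y_i e_i` (`1 ≤ i ≤ k`) and `−x_j e_i + x_i e_j` (`1 ≤ i < j ≤ k`).
Then every nonzero monomial occurring in any `k × k` minor of `A_k` is either (up to sign)
`y₁y₂⋯y_k` or is divisible by `x_i y_i` for some `i`. -/
theorem monomials_of_minors_of_A
    (p : ℕ) [Fact p.Prime] (k : ℕ)
    (x y : Fin k → MvPolynomial (Fin k ⊕ Fin k) ℤ_[p])
    (hx : ∀ i, x i = MvPolynomial.X (Sum.inl i))
    (hy : ∀ i, y i = MvPolynomial.X (Sum.inr i))
    (A : Matrix (Fin k) (Fin k ⊕ {q : Fin k × Fin k // q.1 < q.2})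
      (MvPolynomial (Fin k ⊕ Fin k) ℤ_[p]))
    (hA₁ : ∀ (i j : Fin k), A i (Sum.inl j) = if i = j then y j else 0)
    (hA₂ : ∀ (i : Fin k) (c : {q : Fin k × Fin k // q.1 < q.2}),
      A i (Sum.inr c) =
        (if i = c.1.1 then -(x c.1.2) else 0) + (if i = c.1.2 then x c.1.1 else 0)) :
    ∀ sel : Fin k → (Fin k ⊕ {q : Fin k × Fin k // q.1 < q.2}),
      Function.Injective sel →
        ∀ d ∈ ((Matrix.of fun i j => A i (sel j)).det).support,
          (∀ i : Fin k, d (Sum.inl i) = 0 ∧ d (Sum.inr i) = 1) ∨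
            ∃ i : Fin k, 1 ≤ d (Sum.inl i) ∧ 1 ≤ d (Sum.inr i) := by
  intro sel hsel d hd
  by_cases h1 : ∃ i : Fin k, 1 ≤ d (Sum.inl i) ∧ 1 ≤ d (Sum.inr i)
  · exact Or.inr h1
  push_neg at h1
  have hdisj : ∀ i : Fin k, d (Sum.inl i) = 0 ∨ d (Sum.inr i) = 0 := by
    intro i
    rcases Nat.eq_zero_or_pos (d (Sum.inl i)) with h | h
    · exact Or.inl h
    · exact Or.inr (Nat.lt_one_iff.mp (h1 i h))
  set M : Matrix (Fin k) (Fin k) (MvPolynomial (Fin k ⊕ Fin k) ℤ_[p]) :=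
    Matrix.of fun i j => A i (sel j) with hM
  set f : (Fin k ⊕ Fin k) → MvPolynomial (Fin k ⊕ Fin k) ℤ_[p] :=
    fun v => if d v ≠ 0 then X v else 0 with hfdef
  have hφcoeff : coeff d ((M.map (aeval f)).det) = coeff d M.det := by
    have h := AlgHom.map_det (aeval f) M
    rw [AlgHom.mapMatrix_apply] at h
    rw [← h]
    exact coeff_aeval_keep (fun v => d v ≠ 0) d (fun v hv => hv) M.det
  have hdne : coeff d M.det ≠ 0 := mem_support_iff.mp hd
  have hdetne : (M.map (aeval f)).det ≠ 0 := by
    intro h0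
    rw [h0, coeff_zero] at hφcoeff
    exact hdne hφcoeff.symm
  -- Step 1: no x variables occur in d
  have hinl : ∀ i : Fin k, d (Sum.inl i) = 0 := by
    by_contra hc
    push_neg at hc
    obtain ⟨i₀, hi₀⟩ := hc
    set v : Fin k → MvPolynomial (Fin k ⊕ Fin k) ℤ_[p] :=
      fun i => f (Sum.inl i) with hv
    have hnull : Matrix.vecMul v (M.map (aeval f)) = 0 := by
      funext j
      rcases hsj : sel j with t | c
      · have hent : ∀ i, (M.map (aeval f)) i j = if i = t then f (Sum.inr t) else 0 := by
          intro i
          show aeval f (A i (sel j)) = _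
          rw [hsj, hA₁, hy]
          split
          · exact aeval_X f _
          · exact map_zero _
        simp only [Matrix.vecMul, dotProduct, hent, mul_ite, mul_zero, Pi.zero_apply]
        rw [Finset.sum_ite_eq' Finset.univ t (fun i => v i * f (Sum.inr t))]
        simp only [Finset.mem_univ, if_true]
        by_cases ht : d (Sum.inr t) = 0
        · simp [hfdef, ht]
        · have h0 : d (Sum.inl t) = 0 := (hdisj t).resolve_right ht
          simp [hv, hfdef, h0]
      · have hent : ∀ i, (M.map (aeval f)) i j =
            (if i = c.1.1 then -(v c.1.2) else 0) + (if i = c.1.2 then v c.1.1 else 0) := by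
          intro i
          show aeval f (A i (sel j)) = _
          rw [hsj, hA₂ i c, hx, hx, map_add]
          congr 1
          · split
            · rw [map_neg, aeval_X]
            · exact map_zero _
          · split
            · exact aeval_X f _
            · exact map_zero _
        simp only [Matrix.vecMul, dotProduct, hent, mul_add, mul_ite, mul_zero,
          mul_neg, Pi.zero_apply]
        rw [Finset.sum_add_distrib,
          Finset.sum_ite_eq' Finset.univ c.1.1 (fun i => -(v i * v c.1.2)),
          Finset.sum_ite_eq' Finset.univ c.1.2 (fun i => v i * v c.1.1)]
        simp only [Finset.mem_univ, if_true]
        ring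
    have hkey : v i₀ * (M.map (aeval f)).det = 0 := by
      have h := congrFun (Matrix.vecMul_vecMul v (M.map (aeval f)) (M.map (aeval f)).adjugate) i₀
      rw [hnull, Matrix.zero_vecMul, Matrix.mul_adjugate] at h
      simpa [Matrix.vecMul, dotProduct, Matrix.smul_apply, Matrix.one_apply, mul_ite,
        mul_zero, Finset.sum_ite_eq', mul_comm] using h.symm
    have hvne : v i₀ ≠ 0 := by
      simp only [hv, hfdef, if_pos hi₀]
      exact X_ne_zero _
    rcases mul_eq_zero.mp hkey with h | h
    · exact hvne h
    · exact hdetne h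
  -- Step 2: every y variable occurs in d
  have hinr : ∀ i : Fin k, d (Sum.inr i) ≠ 0 := by
    intro i₀ hi₀
    apply hdetne
    apply Matrix.det_eq_zero_of_row_eq_zero i₀
    intro j
    rcases hsj : sel j with t | c
    · by_cases hit : i₀ = t
      · subst hit
        simp [hM, Matrix.map_apply, hsj, hA₁, hy, hfdef, hi₀]
      · simp [hM, Matrix.map_apply, hsj, hA₁, hit]
    · have hz : ∀ c' : Fin k,
          aeval f (X (Sum.inl c') : MvPolynomial (Fin k ⊕ Fin k) ℤ_[p]) = 0 := by
        intro c'
        rw [aeval_X, hfdef]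
        simp [hinl c']
      rw [Matrix.map_apply]
      show aeval f (A i₀ (sel j)) = 0
      rw [hsj, hA₂ i₀ c, hx, hx, map_add]
      have e1 : aeval f (if i₀ = c.1.1 then -(X (Sum.inl c.1.2) : MvPolynomial (Fin k ⊕ Fin k) ℤ_[p]) else 0) = 0 := by
        split
        · rw [map_neg, hz, neg_zero]
        · exact map_zero _
      have e2 : aeval f (if i₀ = c.1.2 then (X (Sum.inl c.1.1) : MvPolynomial (Fin k ⊕ Fin k) ℤ_[p]) else 0) = 0 := by
        split
        · exact hz _
        · exact map_zero _
      rw [e1, e2, add_zero]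
  -- Step 3: homogeneity of degree k
  have hhom : M.det.IsHomogeneous k := by
    rw [Matrix.det_apply]
    apply IsHomogeneous.sum
    intro σ' _
    have hp : (∏ i, M (σ' i) i).IsHomogeneous k := by
      have hent : ∀ i ∈ Finset.univ, (M (σ' i) i).IsHomogeneous 1 := by
        intro i _
        rcases hsi : sel i with t | c
        · simp only [hM, Matrix.of_apply, hsi, hA₁, hy]
          split
          · exact isHomogeneous_X _ _
          · exact isHomogeneous_zero _ _ _
        · simp only [hM, Matrix.of_apply, hsi, hA₂, hx]
          apply IsHomogeneous.add
          · split
            · exact (isHomogeneous_X _ _).neg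
            · exact isHomogeneous_zero _ _ _
          · split
            · exact isHomogeneous_X _ _
            · exact isHomogeneous_zero _ _ _
      have := IsHomogeneous.prod Finset.univ (fun i => M (σ' i) i) (fun _ => 1) hent
      simpa using this
    rcases Int.units_eq_one_or (Equiv.Perm.sign σ') with h | h
    · rw [h, one_smul]; exact hp
    · rw [h, Units.neg_smul, one_smul]; exact hp.neg
  have hdeg : (Finsupp.weight 1) d = k := hhom hdne
  have hsum : ∑ i : Fin k, d (Sum.inr i) = k := by
    have h4 : ∑ v ∈ d.support, d v = k := by
      rw [← Finsupp.degree_apply, Finsupp.degree_eq_weight_one]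
      exact hdeg
    have h6 : ∑ v : (Fin k ⊕ Fin k), d v = ∑ v ∈ d.support, d v :=
      (Finset.sum_subset (Finset.subset_univ d.support)
        (fun x _ hx => Finsupp.notMem_support_iff.mp hx)).symm
    have h5 : ∑ v : (Fin k ⊕ Fin k), d v = k := h6.trans h4
    rw [Fintype.sum_sum_type] at h5
    simpa [hinl] using h5
  left
  intro i
  refine ⟨hinl i, ?_⟩
  have hle : ∀ j ∈ Finset.univ, 1 ≤ d (Sum.inr j) :=
    fun j _ => Nat.one_le_iff_ne_zero.mpr (hinr j)
  have heq : ∑ _j : Fin k, 1 = ∑ j : Fin k, d (Sum.inr j) := by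
    rw [hsum]; simp
  exact ((Finset.sum_eq_sum_iff_of_le hle).mp heq i (Finset.mem_univ i)).symm
end
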